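/- arXiv:2104.14253 — 4 statements merged into one kernel-verified Lean document; each statement's English description precedes it below -/
import Mathlib

section
/- For X ≥ 1, we have ∑_{n ≤ X} 1/n = log(X) + γ + θ·(2/(3X)) for some real θ with |θ| ≤ 1. -/
open Real Filter

-- trapezoid upper bound
lemma log_le_trap {y : ℝ} (hy : 1 ≤ y) : Real.log y ≤ (y - y⁻¹) / 2 := by
  have h0 : 0 ≤ Real.log y := Real.log_nonneg hy
  calc Real.log y ≤ Real.sinh (Real.log y) := Real.self_le_sinh_iff.mpr h0
    _ = (y - y⁻¹) / 2 := Real.sinh_log (by linarith)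

-- midpoint lower bound
lemma mid_le_log {y : ℝ} (hy : 1 ≤ y) : 2 * (y - 1) / (y + 1) ≤ Real.log y := by
  have key : MonotoneOn (fun t : ℝ => Real.log t - 2 * (t - 1) / (t + 1)) (Set.Ici 1) := by
    have hd : ∀ x ∈ interior (Set.Ici (1:ℝ)),
        HasDerivAt (fun t : ℝ => Real.log t - 2 * (t - 1) / (t + 1))
          (x⁻¹ - (2 * (x + 1) - 2 * (x - 1) * 1) / (x + 1) ^ 2) x := by
      intro x hx
      rw [interior_Ici, Set.mem_Ioi] at hx
      have h1 : HasDerivAt (fun t : ℝ => 2 * (t - 1)) 2 x := by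
        simpa using ((hasDerivAt_id x).sub_const 1).const_mul 2
      have h2 : HasDerivAt (fun t : ℝ => t + 1) 1 x := (hasDerivAt_id x).add_const 1
      have h3 := (Real.hasDerivAt_log (by linarith : x ≠ 0)).sub (h1.div h2 (by linarith))
      exact h3
    apply monotoneOn_of_deriv_nonneg (convex_Ici 1)
    · apply ContinuousOn.sub
      · exact Real.continuousOn_log.mono (by intro x hx; simp at hx ⊢; intro h; linarith)
      · apply ContinuousOn.div (by fun_prop) (by fun_prop)
        intro x hx; simp at hx; intro h; linarith
    · intro x hx
      exact ((hd x hx).differentiableAt).differentiableWithinAt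
    · intro x hx
      have hx' := hx
      rw [interior_Ici, Set.mem_Ioi] at hx'
      rw [(hd x hx).deriv]
      have : (0:ℝ) < x := by linarith
      rw [sub_nonneg, div_le_iff₀ (by positivity)]
      rw [inv_eq_one_div, div_mul_eq_mul_div, le_div_iff₀ this]
      nlinarith
  have h := key (Set.mem_Ici.mpr le_rfl) (Set.mem_Ici.mpr hy) hy
  simp only [Real.log_one] at h
  nlinarith [h]

lemma up_step {k : ℕ} (hk : 1 ≤ k) :
    Real.log (k + 1) - Real.log k - 1 / (k + 1) ≤ 1 / (2 * k) - 1 / (2 * (k + 1)) := by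
  have hk' : (1:ℝ) ≤ (k:ℝ) := by exact_mod_cast hk
  have hkpos : (0:ℝ) < k := by linarith
  have hy : (1:ℝ) ≤ (k + 1) / k := by rw [le_div_iff₀ hkpos]; linarith
  have h := log_le_trap hy
  rw [Real.log_div (by positivity) (by positivity)] at h
  have h2 : ((k:ℝ) + 1) / (k:ℝ) - (((k:ℝ) + 1) / (k:ℝ))⁻¹ = (2 * (k:ℝ) + 1) / ((k:ℝ) * ((k:ℝ) + 1)) := by
    rw [inv_div]; field_simp; ring
  rw [h2] at h
  have : (2 * (k:ℝ) + 1) / (k * (k + 1)) / 2 = 1 / (2 * k) - 1 / (2 * (k + 1)) + 1 / (k + 1) := by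
    field_simp; ring
  linarith [this ▸ h]

lemma lo_step {k : ℕ} (hk : 1 ≤ k) :
    1 / (2 * (k:ℝ) + 1) - 1 / (2 * (k + 1) + 1) ≤ Real.log (k + 1) - Real.log k - 1 / (k + 1) := by
  have hk' : (1:ℝ) ≤ (k:ℝ) := by exact_mod_cast hk
  have hkpos : (0:ℝ) < k := by linarith
  have hy : (1:ℝ) ≤ (k + 1) / k := by rw [le_div_iff₀ hkpos]; linarith
  have h := mid_le_log hy
  rw [Real.log_div (by positivity) (by positivity)] at h
  have h2 : 2 * (((k:ℝ) + 1) / (k:ℝ) - 1) / (((k:ℝ) + 1) / (k:ℝ) + 1) = 2 / (2 * (k:ℝ) + 1) := by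
    rw [div_eq_div_iff (by positivity) (by positivity)]
    field_simp
    ring
  rw [h2] at h
  have h3 : 1 / (2 * (k:ℝ) + 1) - 1 / (2 * (k + 1) + 1) + 1 / (k + 1) ≤ 2 / (2 * k + 1) := by
    rw [div_sub_div _ _ (show (2*(k:ℝ)+1) ≠ 0 by positivity) (show (2*((k:ℝ)+1)+1) ≠ 0 by positivity),
      div_add_div _ _ (show (2*(k:ℝ)+1)*(2*((k:ℝ)+1)+1) ≠ 0 by positivity) (show ((k:ℝ)+1) ≠ 0 by positivity),
      div_le_div_iff₀ (by positivity) (by positivity)]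
    nlinarith [hkpos]
  linarith

lemma sandwich (N : ℕ) (hN : 1 ≤ N) : ∀ M, N ≤ M →
    ((harmonic N : ℝ) - Real.log N) - ((harmonic M : ℝ) - Real.log M) ≤ 1 / (2 * N) - 1 / (2 * M) ∧
    1 / (2 * (N:ℝ) + 1) - 1 / (2 * (M:ℝ) + 1) ≤
      ((harmonic N : ℝ) - Real.log N) - ((harmonic M : ℝ) - Real.log M) := by
  intro M hM
  induction M, hM using Nat.le_induction with
  | base => simp
  | succ M hM ih =>
    have hM1 : 1 ≤ M := le_trans hN hM
    have h1 := up_step hM1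
    have h2 := lo_step hM1
    have hs : (harmonic (M + 1) : ℝ) = (harmonic M : ℝ) + 1 / ((M:ℝ) + 1) := by
      rw [harmonic_succ]; push_cast; ring
    constructor
    · have := ih.1
      rw [hs]
      push_cast
      push_cast at this h1
      linarith
    · have := ih.2
      rw [hs]
      push_cast
      push_cast at this h2
      linarith

lemma d_le_half (N : ℕ) (hN : 1 ≤ N) :
    (harmonic N : ℝ) - Real.log N - Real.eulerMascheroniConstant ≤ 1 / (2 * N) := by
  have hT : Filter.Tendsto (fun M : ℕ => ((harmonic N : ℝ) - Real.log N) - ((harmonic M : ℝ) - Real.log M))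
      Filter.atTop (nhds (((harmonic N : ℝ) - Real.log N) - Real.eulerMascheroniConstant)) :=
    tendsto_const_nhds.sub Real.tendsto_harmonic_sub_log
  refine le_of_tendsto hT ?_
  filter_upwards [Filter.eventually_ge_atTop N] with M hM
  have h := (sandwich N hN M hM).1
  have : (0:ℝ) ≤ 1 / (2 * (M:ℝ)) := by positivity
  linarith

lemma le_d (N : ℕ) (hN : 1 ≤ N) :
    1 / (2 * (N:ℝ) + 1) ≤ (harmonic N : ℝ) - Real.log N - Real.eulerMascheroniConstant := by
  have h0 : Filter.Tendsto (fun M : ℕ => 1 / (2 * (M:ℝ) + 1)) Filter.atTop (nhds 0) := by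
    have h1 : Filter.Tendsto (fun M : ℕ => 2 * (M:ℝ) + 1) Filter.atTop Filter.atTop := by
      apply Filter.tendsto_atTop_add_const_right
      exact Filter.Tendsto.const_mul_atTop two_pos tendsto_natCast_atTop_atTop
    simp only [one_div]
    exact h1.inv_tendsto_atTop
  have hT : Filter.Tendsto
      (fun M : ℕ => ((harmonic N : ℝ) - Real.log N) - ((harmonic M : ℝ) - Real.log M) + 1 / (2 * (M:ℝ) + 1))
      Filter.atTop (nhds (((harmonic N : ℝ) - Real.log N) - Real.eulerMascheroniConstant + 0)) :=
    (tendsto_const_nhds.sub Real.tendsto_harmonic_sub_log).add h0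
  rw [add_zero] at hT
  refine ge_of_tendsto hT ?_
  filter_upwards [Filter.eventually_ge_atTop N] with M hM
  have h := (sandwich N hN M hM).2
  linarith

lemma gamma_numeric : Real.eulerMascheroniConstant + Real.log 2 ≤ 4/3 := by
  have h1 : Real.eulerMascheroniConstant < (harmonic 16 : ℝ) - Real.log 16 := by
    have h := Real.eulerMascheroniConstant_lt_eulerMascheroniSeq' 16
    simpa [Real.eulerMascheroniSeq'] using h
  have h2 : Real.log 16 = 4 * Real.log 2 := by
    rw [show (16:ℝ) = 2^4 by norm_num, Real.log_pow]; norm_num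
  have h3 : (harmonic 16 : ℝ) = 2436559/720720 := by
    have : harmonic 16 = 2436559/720720 := by
      norm_num [harmonic, Finset.sum_range_succ]
    rw [this]
    norm_num
  have h4 : (0.6931471803 : ℝ) < Real.log 2 := Real.log_two_gt_d9
  rw [h2, h3] at h1
  linarith

theorem sum_inv_eq_log_add_gamma (X : ℝ) (hX : 1 ≤ X) :
    ∃ θ : ℝ, |θ| ≤ 1 ∧
      ∑ n ∈ Finset.Icc 1 ⌊X⌋₊, (1 : ℝ) / n =
        Real.log X + Real.eulerMascheroniConstant + θ * (2 / (3 * X)) := by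
  have hX0 : (0:ℝ) < X := by linarith
  set N := ⌊X⌋₊ with hNdef
  have hN1 : 1 ≤ N := Nat.le_floor (by exact_mod_cast hX)
  have hNX : (N:ℝ) ≤ X := Nat.floor_le hX0.le
  have hXN : X < (N:ℝ) + 1 := Nat.lt_floor_add_one X
  have hNr : (1:ℝ) ≤ (N:ℝ) := by exact_mod_cast hN1
  have hNr0 : (0:ℝ) < (N:ℝ) := by linarith
  have hsum : ∑ n ∈ Finset.Icc 1 N, (1:ℝ)/n = (harmonic N : ℝ) := by
    rw [harmonic_eq_sum_Icc]
    push_cast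
    simp [one_div]
  set S := (harmonic N : ℝ) with hSdef
  set γ := Real.eulerMascheroniConstant with hγ
  have key : |S - Real.log X - γ| ≤ 2/(3*X) := by
    rw [abs_le]
    constructor
    · -- log X + γ - S ≤ 2/(3X)
      rcases eq_or_lt_of_le hN1 with h1 | h2
      · -- N = 1
        have hS1 : S = 1 := by
          rw [hSdef, ← h1]
          have : harmonic 1 = 1 := by norm_num [harmonic, Finset.sum_range_succ]
          rw [this]
          norm_num
        have hX2 : X ≤ 2 := by rw [← h1] at hXN; push_cast at hXN; linarith
        have hlog : Real.log X ≤ Real.log 2 := Real.log_le_log hX0 hX2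
        have hg := gamma_numeric
        have h13 : (1:ℝ)/3 ≤ 2/(3*X) := by
          rw [div_le_div_iff₀ (by norm_num) (by positivity)]
          linarith
        linarith
      · -- N ≥ 2
        have hn2 : (2:ℝ) ≤ (N:ℝ) := by exact_mod_cast h2
        have hd := le_d N hN1
        have hup := up_step hN1
        have hlogX : Real.log X ≤ Real.log ((N:ℝ)+1) := Real.log_le_log hX0 hXN.le
        have h23 : 2/(3*((N:ℝ)+1)) ≤ 2/(3*X) := by
          rw [div_le_div_iff₀ (by positivity) (by positivity)]
          nlinarith
        have harith : 1/(2*(N:ℝ)) - 1/(2*((N:ℝ)+1)) + 1/((N:ℝ)+1) - 1/(2*(N:ℝ)+1)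
            ≤ 2/(3*((N:ℝ)+1)) := by
          have e : 1/(2*(N:ℝ)) - 1/(2*((N:ℝ)+1)) + 1/((N:ℝ)+1) - 1/(2*(N:ℝ)+1)
              = (2*(N:ℝ)^2+2*(N:ℝ)+1)/(2*(N:ℝ)*((N:ℝ)+1)*(2*(N:ℝ)+1)) := by
            field_simp
            ring
          rw [e, div_le_div_iff₀ (by positivity) (by positivity)]
          nlinarith
        linarith
    · -- S - log X - γ ≤ 2/(3X)
      have hd := d_le_half N hN1
      have hlog : 1 - (N:ℝ)/X ≤ Real.log X - Real.log N := by
        have h := Real.log_le_sub_one_of_pos (show (0:ℝ) < (N:ℝ)/X by positivity)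
        rw [Real.log_div (by positivity) (by positivity)] at h
        linarith
      have harith2 : 1/(2*(N:ℝ)) - 1 + (N:ℝ)/X ≤ 2/(3*X) := by
        have e2 : 1/(2*(N:ℝ)) - 1 + (N:ℝ)/X = (X - 2*(N:ℝ)*X + 2*(N:ℝ)^2)/(2*(N:ℝ)*X) := by
          field_simp
        rw [e2, div_le_div_iff₀ (by positivity) (by positivity)]
        nlinarith [mul_nonneg (sub_nonneg.2 hNX) (show (0:ℝ) ≤ 6*(N:ℝ)-3 by linarith),
          mul_pos hX0 hX0, mul_pos hNr0 hX0]
      linarith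
  have h23X : (0:ℝ) < 2/(3*X) := by positivity
  refine ⟨(S - Real.log X - γ) / (2/(3*X)), ?_, ?_⟩
  · rw [abs_div, abs_of_pos h23X, div_le_one h23X]
    exact key
  · rw [hsum, div_mul_cancel₀ _ h23X.ne']
    ring
end

section
/- For X ≥ 1, we have ∑_{n ≤ X} d(n) = X log(X) + (2γ - 1)X + θ·(16/3)·√X for some real θ with |θ| ≤ 1. -/
open Finset Real

lemma swap_count' {α β : Type*} (s : Finset α) (t : Finset β) (p : α → β → Prop)
    [∀ a b, Decidable (p a b)] :
    ∑ a ∈ s, (t.filter (fun b => p a b)).card = ∑ b ∈ t, (s.filter (fun a => p a b)).card := by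
  simp_rw [Finset.card_filter]
  exact Finset.sum_comm

lemma div_sum_eq (N : ℕ) :
    ∑ n ∈ Icc 1 N, n.divisors.card = ∑ a ∈ Icc 1 N, N / a := by
  have h1 : ∀ n ∈ Icc 1 N, n.divisors.card = ((Icc 1 N).filter (fun a => a ∣ n)).card := by
    intro n hn
    simp only [mem_Icc] at hn
    congr 1
    ext a
    simp only [Nat.mem_divisors, mem_filter, mem_Icc]
    constructor
    · rintro ⟨hd, hn0⟩
      exact ⟨⟨Nat.pos_of_dvd_of_pos hd (by omega), le_trans (Nat.le_of_dvd (by omega) hd) hn.2⟩, hd⟩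
    · rintro ⟨_, hd⟩
      exact ⟨hd, by omega⟩
  rw [Finset.sum_congr rfl h1]
  rw [show (Icc 1 N) = Ioc 0 N by rfl]
  rw [swap_count' (Ioc 0 N) (Ioc 0 N) (fun n a => a ∣ n)]
  refine Finset.sum_congr rfl fun a _ => ?_
  exact Nat.Ioc_filter_dvd_card_eq_div N a

lemma hyperbola (N : ℕ) :
    ∑ a ∈ Icc 1 N, N / a + N.sqrt * N.sqrt = 2 * ∑ a ∈ Icc 1 N.sqrt, N / a := by
  rcases Nat.eq_zero_or_pos N with rfl | hN
  · simp
  set D := N.sqrt with hD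
  have hD1 : 1 ≤ D := Nat.sqrt_pos.mpr hN
  have hDN : D ≤ N := Nat.sqrt_le_self N
  have hDD : D * D ≤ N := Nat.sqrt_le N
  have hlt : N < (D + 1) * (D + 1) := Nat.lt_succ_sqrt N
  -- split the sum
  have hsplit : ∑ a ∈ Icc 1 N, N / a
      = ∑ a ∈ Icc 1 D, N / a + ∑ a ∈ Ioc D N, N / a := by
    have e1 : Icc 1 N = Ioc 0 N := rfl
    have e2 : Icc 1 D = Ioc 0 D := rfl
    rw [e1, e2, ← Finset.sum_union]
    · rw [Finset.Ioc_union_Ioc_eq_Ioc (Nat.zero_le D) hDN]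
    · rw [Finset.disjoint_left]
      intro x hx hx'
      simp only [mem_Ioc] at hx hx'
      omega
  -- the tail sum
  have htail : ∑ a ∈ Ioc D N, N / a = ∑ b ∈ Icc 1 D, (N / b - D) := by
    have hL : ∀ a ∈ Ioc D N, N / a = ((Icc 1 D).filter (fun b => a * b ≤ N)).card := by
      intro a ha
      simp only [mem_Ioc] at ha
      have ha0 : 0 < a := lt_of_le_of_lt (Nat.zero_le D) ha.1
      have hNa : N / a ≤ D := by
        have h1 : N / a ≤ N / (D + 1) := Nat.div_le_div_left ha.1 (Nat.succ_pos D)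
        have h2 : N / (D + 1) < D + 1 := (Nat.div_lt_iff_lt_mul (Nat.succ_pos D)).mpr hlt
        omega
      have : (Icc 1 D).filter (fun b => a * b ≤ N) = Icc 1 (N / a) := by
        ext b
        simp only [mem_filter, mem_Icc]
        rw [mul_comm]
        rw [← Nat.le_div_iff_mul_le ha0]
        omega
      rw [this, Nat.card_Icc]
      simp
    have hR : ∀ b ∈ Icc 1 D, ((Ioc D N).filter (fun a => a * b ≤ N)).card = N / b - D := by
      intro b hb
      simp only [mem_Icc] at hb
      have hb0 : 0 < b := hb.1
      have hNbN : N / b ≤ N := Nat.div_le_self N b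
      have : (Ioc D N).filter (fun a => a * b ≤ N) = Ioc D (N / b) := by
        ext a
        simp only [mem_filter, mem_Ioc]
        rw [← Nat.le_div_iff_mul_le hb0]
        omega
      rw [this, Nat.card_Ioc]
    rw [Finset.sum_congr rfl hL, swap_count' (Ioc D N) (Icc 1 D) (fun a b => a * b ≤ N),
      Finset.sum_congr rfl hR]
  have hterm : ∀ b ∈ Icc 1 D, D ≤ N / b := by
    intro b hb
    simp only [mem_Icc] at hb
    rw [Nat.le_div_iff_mul_le hb.1]
    calc D * b ≤ D * D := Nat.mul_le_mul_left D hb.2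
    _ ≤ N := hDD
  have hsq : ∑ b ∈ Icc 1 D, (N / b - D) + D * D = ∑ b ∈ Icc 1 D, N / b := by
    have : ∑ b ∈ Icc 1 D, (N / b - D) + ∑ b ∈ Icc 1 D, D = ∑ b ∈ Icc 1 D, N / b := by
      rw [← Finset.sum_add_distrib]
      refine Finset.sum_congr rfl fun b hb => ?_
      have := hterm b hb
      omega
    simpa [Finset.sum_const, Nat.card_Icc, mul_comm] using this
  omega

lemma harmonic_real (D : ℕ) :
    ((harmonic D : ℚ) : ℝ) = ∑ a ∈ Icc 1 D, (a : ℝ)⁻¹ := by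
  rw [harmonic_eq_sum_Icc]; push_cast; rfl

lemma harmonic_bounds (D : ℕ) (hD : 1 ≤ D) :
    Real.eulerMascheroniConstant + Real.log D < ∑ a ∈ Icc 1 D, (a : ℝ)⁻¹ ∧
    ∑ a ∈ Icc 1 D, (a : ℝ)⁻¹ < Real.eulerMascheroniConstant + Real.log (D + 1) := by
  have h1 := Real.eulerMascheroniConstant_lt_eulerMascheroniSeq' D
  have h2 := Real.eulerMascheroniSeq_lt_eulerMascheroniConstant D
  rw [Real.eulerMascheroniSeq'] at h1
  rw [Real.eulerMascheroniSeq] at h2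
  have hne : D ≠ 0 := by omega
  simp only [hne, if_false] at h1
  rw [harmonic_real] at h1 h2
  constructor <;> [linarith; linarith]

set_option maxHeartbeats 1000000 in
theorem sum_divisor_count (X : ℝ) (hX : 1 ≤ X) :
    ∃ θ : ℝ, |θ| ≤ 1 ∧
      ∑ n ∈ Finset.Icc 1 ⌊X⌋₊, ((n.divisors.card : ℝ)) =
        X * Real.log X + (2 * Real.eulerMascheroniConstant - 1) * X
          + θ * (16 / 3) * Real.sqrt X := by
  have hX0 : (0:ℝ) < X := by linarith
  set γ := Real.eulerMascheroniConstant with hγdef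
  clear_value γ
  set N := ⌊X⌋₊ with hNdef
  have hN1 : 1 ≤ N := Nat.le_floor (by exact_mod_cast hX)
  have hNX : (N : ℝ) ≤ X := Nat.floor_le (le_of_lt hX0)
  have hXN : X < (N : ℝ) + 1 := Nat.lt_floor_add_one X
  set D := N.sqrt with hDdef
  have hD1 : 1 ≤ D := Nat.sqrt_pos.mpr hN1
  have hDD : D * D ≤ N := Nat.sqrt_le N
  have hlt : N < (D + 1) * (D + 1) := Nat.lt_succ_sqrt N
  set S : ℝ := ∑ n ∈ Icc 1 N, ((n.divisors.card : ℝ)) with hSdef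
  set T : ℝ := ((∑ a ∈ Icc 1 D, N / a : ℕ) : ℝ) with hTdef
  have hkeyN : ∑ n ∈ Icc 1 N, n.divisors.card + D * D = 2 * ∑ a ∈ Icc 1 D, N / a := by
    rw [div_sum_eq]; exact hyperbola N
  clear_value N D
  have hkey : S + (D : ℝ) * D = 2 * T := by
    rw [hSdef, hTdef]
    have := congrArg (fun n : ℕ => (n : ℝ)) hkeyN
    push_cast at this ⊢
    linarith [this]
  clear_value S T
  set H : ℝ := ∑ a ∈ Icc 1 D, (a : ℝ)⁻¹ with hHdef
  -- bounds on T
  have hTub : T ≤ X * H := by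
    rw [hTdef, hHdef]
    push_cast
    rw [Finset.mul_sum]
    refine Finset.sum_le_sum fun a ha => ?_
    simp only [mem_Icc] at ha
    have ha0 : (0:ℝ) < a := by exact_mod_cast ha.1
    calc ((N / a : ℕ) : ℝ) ≤ (N : ℝ) / a := Nat.cast_div_le
    _ ≤ X / a := by gcongr
    _ = X * (a:ℝ)⁻¹ := div_eq_mul_inv X _
  have hTlb : X * H - D < T := by
    rw [hTdef, hHdef]
    push_cast
    have hne : (Icc 1 D).Nonempty := ⟨1, by simp [hD1]⟩
    have hsum : ∑ a ∈ Icc 1 D, (X * (a:ℝ)⁻¹ - 1) < ∑ a ∈ Icc 1 D, ((N / a : ℕ) : ℝ) := by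
      refine Finset.sum_lt_sum_of_nonempty hne fun a ha => ?_
      simp only [mem_Icc] at ha
      have ha0 : 0 < a := ha.1
      have ha0' : (0:ℝ) < a := by exact_mod_cast ha0
      have h1 : N < (N / a + 1) * a := (Nat.div_lt_iff_lt_mul ha0).mp (Nat.lt_succ_self _)
      have h1' : (N : ℝ) + 1 ≤ ((N / a : ℕ) + 1) * a := by exact_mod_cast h1
      have h2 : X < ((N / a : ℕ) + 1) * a := lt_of_lt_of_le hXN h1'
      have h3 : X / a < ((N / a : ℕ) : ℝ) + 1 := by
        rw [div_lt_iff₀ ha0']; linarith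
      rw [← div_eq_mul_inv]
      linarith
    have : ∑ a ∈ Icc 1 D, (X * (a:ℝ)⁻¹ - 1) = X * ∑ a ∈ Icc 1 D, (a:ℝ)⁻¹ - D := by
      rw [Finset.sum_sub_distrib, Finset.mul_sum, Finset.sum_const, Nat.card_Icc]
      simp
    linarith [hsum, this]
  obtain ⟨hHlb, hHub⟩ := harmonic_bounds D hD1
  rw [← hHdef, ← hγdef] at hHlb hHub
  push_cast at hHub
  -- sqrt facts
  set s : ℝ := Real.sqrt X with hsdef
  clear_value H
  have hs0 : 0 < s := Real.sqrt_pos.mpr hX0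
  have hs2 : s * s = X := Real.mul_self_sqrt (le_of_lt hX0)
  have hDs : (D : ℝ) ≤ s := by
    rw [hsdef]
    rw [show ((D:ℝ)) = Real.sqrt ((D:ℝ)^2) by rw [Real.sqrt_sq (by positivity)]]
    apply Real.sqrt_le_sqrt
    have : ((D * D : ℕ) : ℝ) ≤ X := le_trans (by exact_mod_cast Nat.cast_le.mpr hDD) hNX
    push_cast at this
    nlinarith [this]
  have hsD : s < (D : ℝ) + 1 := by
    have h1 : X < ((D:ℝ) + 1) * ((D:ℝ) + 1) := by
      have : ((N : ℝ) + 1) ≤ (((D + 1) * (D + 1) : ℕ) : ℝ) := by exact_mod_cast hlt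
      push_cast at this
      linarith
    nlinarith [hs0, hs2, h1]
  -- log facts
  have hlogX : X * Real.log X = 2 * X * Real.log s := by
    rw [hsdef, Real.log_sqrt (le_of_lt hX0)]; ring
  clear_value s
  have hD0' : (0:ℝ) < D := by exact_mod_cast hD1
  have hlog1 : Real.log ((D:ℝ) + 1) - Real.log s ≤ ((D:ℝ) + 1) / s - 1 := by
    rw [← Real.log_div (by positivity) (ne_of_gt hs0)]
    exact Real.log_le_sub_one_of_pos (by positivity)
  have hlog2 : Real.log s - Real.log D ≤ s / (D:ℝ) - 1 := by
    rw [← Real.log_div (ne_of_gt hs0) (ne_of_gt hD0')]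
    exact Real.log_le_sub_one_of_pos (by positivity)
  set M : ℝ := X * Real.log X + (2 * γ - 1) * X with hMdef
  clear_value M
  have hSD : S = 2 * T - (D:ℝ) * D := by linarith [hkey]
  have main_bound : |S - M| ≤ 16 / 3 * s := by
    rcases le_or_gt 9 X with hbig | hsmall
    · -- big case
      have hN9 : 9 ≤ N := by rw [hNdef]; exact Nat.le_floor (by exact_mod_cast hbig)
      have hD3 : 3 ≤ D := by
        rw [hDdef]
        calc 3 = Nat.sqrt 9 := by rw [show (9:ℕ) = 3*3 from rfl, Nat.sqrt_eq]
        _ ≤ N.sqrt := Nat.sqrt_le_sqrt hN9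
      have hD3' : (3:ℝ) ≤ D := by exact_mod_cast hD3
      have hs3 : (3:ℝ) ≤ s := le_trans hD3' hDs
      rw [abs_le]
      constructor
      · -- lower bound : M - 16/3 s ≤ S
        have m1 : X * (γ + Real.log D) < X * H := mul_lt_mul_of_pos_left hHlb hX0
        have c1 : 2 * (X * (γ + Real.log D)) - 2 * D - (D:ℝ) * D < S := by
          linarith [hTlb, m1, hSD]
        have c2 : X * (Real.log s - Real.log D) ≤ X * (s / D - 1) :=
          mul_le_mul_of_nonneg_left hlog2 (le_of_lt hX0)
        have c3 : X * (s / D) = s * s * s / D := by rw [← hs2]; ring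
        have p1 : (0:ℝ) ≤ ((D:ℝ) + 1 - s) * (s - (D:ℝ) + 1) * (2 * s + (D:ℝ)) := by
          apply mul_nonneg (mul_nonneg (by linarith) (by linarith)) (by linarith)
        have key : 2 * (s * s * s) ≤ (3 * X - 2 * D - (D:ℝ) * D + 16 / 3 * s) * D := by
          rw [← hs2]
          have hA : (0:ℝ) ≤ (s - (D:ℝ)) * (D:ℝ) := mul_nonneg (by linarith) (le_of_lt hD0')
          have hB : (0:ℝ) ≤ s * ((D:ℝ) - 3) := mul_nonneg (le_of_lt hs0) (by linarith)
          have hC : (0:ℝ) ≤ (D:ℝ) * (s - 3) := mul_nonneg (le_of_lt hD0') (by linarith)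
          have hE : (0:ℝ) ≤ s * (D:ℝ) := mul_nonneg (le_of_lt hs0) (le_of_lt hD0')
          linarith [p1, hA, hB, hC, hE]
        have key' : 2 * (s * s * s / D) ≤ 3 * X - 2 * D - (D:ℝ) * D + 16 / 3 * s := by
          rw [show 2 * (s * s * s / D) = 2 * (s * s * s) / D by ring, div_le_iff₀ hD0']
          exact key
        linarith [c1, c2, c3, hlogX, key']
      · -- upper bound : S ≤ M + 16/3 s
        have m1 : X * H < X * (γ + Real.log ((D:ℝ)+1)) := by
          apply mul_lt_mul_of_pos_left _ hX0
          exact_mod_cast hHub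
        have c1 : S ≤ 2 * (X * (γ + Real.log ((D:ℝ)+1))) - (D:ℝ) * D := by
          linarith [hTub, m1, hSD]
        have c2 : X * (Real.log ((D:ℝ)+1) - Real.log s) ≤ X * (((D:ℝ)+1) / s - 1) :=
          mul_le_mul_of_nonneg_left hlog1 (le_of_lt hX0)
        have c3 : X * (((D:ℝ)+1) / s) = s * ((D:ℝ)+1) := by
          rw [← hs2]; field_simp
        linarith [c1, c2, c3, hlogX, sq_nonneg (s - (D:ℝ)), hs2, le_of_lt hs0]
    · -- small case
      have hN8 : N ≤ 8 := by
        by_contra hcon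
        push_neg at hcon
        have h9 : (9:ℝ) ≤ (N:ℝ) := by exact_mod_cast hcon
        linarith only [h9, hNX, hsmall]
      have hγ1 : 1/2 < γ := by rw [hγdef]; exact Real.one_half_lt_eulerMascheroniConstant
      have hγ2 : γ < 2/3 := by rw [hγdef]; exact Real.eulerMascheroniConstant_lt_two_thirds
      have hMub : M ≤ X * Real.log X + X / 3 := by
        rw [hMdef]
        linarith only [mul_le_mul_of_nonneg_right (by linarith only [hγ2] : 2*γ - 1 ≤ 1/3) (le_of_lt hX0)]
      have hMlb : X * Real.log X ≤ M := by
        rw [hMdef]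
        linarith only [mul_le_mul_of_nonneg_right (by linarith only [hγ1] : (0:ℝ) ≤ 2*γ - 1) (le_of_lt hX0)]
      have hlX0 : 0 ≤ Real.log X := Real.log_nonneg hX
      have hXlogX0 : 0 ≤ X * Real.log X := mul_nonneg (le_of_lt hX0) hlX0
      have hN0' : (0:ℝ) < (N:ℝ) := by exact_mod_cast hN1
      have hlogub : Real.log X ≤ Real.log ((N:ℝ)+1) := by
        gcongr <;> first
          | exact hX0
          | linarith only [hXN]
      have hlogXub : X * Real.log X ≤ ((N:ℝ)+1) * Real.log ((N:ℝ)+1) :=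
        mul_le_mul (le_of_lt hXN) hlogub hlX0 (by positivity)
      have hloglb : Real.log (N:ℝ) ≤ Real.log X := by gcongr
      have hlogN0 : 0 ≤ Real.log (N:ℝ) := Real.log_nonneg (by exact_mod_cast hN1)
      have hlogXlb : (N:ℝ) * Real.log (N:ℝ) ≤ X * Real.log X :=
        mul_le_mul hNX hloglb hlogN0 (le_of_lt hX0)
      have l2u := Real.log_two_lt_d9
      have l2l := Real.log_two_gt_d9
      have l32 : Real.log (3/2:ℝ) ≤ 1/2 :=
        le_trans (Real.log_le_sub_one_of_pos (by norm_num)) (by norm_num)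
      have l3e : Real.log 3 = Real.log 2 + Real.log (3/2:ℝ) := by
        rw [← Real.log_mul (by norm_num) (by norm_num)]; norm_num
      have l54 : Real.log (5/4:ℝ) ≤ 1/4 :=
        le_trans (Real.log_le_sub_one_of_pos (by norm_num)) (by norm_num)
      have l4e : Real.log 4 = 2 * Real.log 2 := by
        rw [show (4:ℝ) = 2^2 by norm_num, Real.log_pow]; norm_num
      have l5e : Real.log 5 = Real.log 4 + Real.log (5/4:ℝ) := by
        rw [← Real.log_mul (by norm_num) (by norm_num)]; norm_num
      have l6e : Real.log 6 = Real.log 2 + Real.log 3 := by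
        rw [← Real.log_mul (by norm_num) (by norm_num)]; norm_num
      have l8e : Real.log 8 = 3 * Real.log 2 := by
        rw [show (8:ℝ) = 2^3 by norm_num, Real.log_pow]; norm_num
      have l78 : Real.log 7 ≤ Real.log 8 := by gcongr <;> norm_num
      have l9e : Real.log 9 = 2 * Real.log 3 := by
        rw [show (9:ℝ) = 3^2 by norm_num, Real.log_pow]; norm_num
      have l7l : Real.log 4 ≤ Real.log 7 := by gcongr <;> norm_num
      have l6l : Real.log 4 ≤ Real.log 6 := by gcongr <;> norm_num
      rw [abs_le]
      interval_cases N
      · -- N = 1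
        have hSv : S = 1 := by
          rw [hSdef]
          have h : (∑ n ∈ Icc 1 1, n.divisors.card : ℕ) = 1 := by decide
          calc ∑ n ∈ Icc 1 1, ((n.divisors.card : ℝ))
              = ((∑ n ∈ Icc 1 1, n.divisors.card : ℕ) : ℝ) := by push_cast; rfl
          _ = 1 := by rw [h]; norm_num
        have hsl : (1:ℝ) ≤ s := by
          rw [hsdef]
          have hNX' : ((1:ℝ)) ≤ X := hX
          calc (1:ℝ) = Real.sqrt ((1:ℝ)^2) := (Real.sqrt_sq (by norm_num)).symm
          _ ≤ Real.sqrt X := Real.sqrt_le_sqrt (by push_cast at hNX; nlinarith only [hNX])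
        norm_num at hNX hXN hlogXub hlogXlb
        constructor
        · linarith only [hMub, hlogXub, hXN, hsl, hSv, l2u, l32, l3e, l54, l4e, l5e, l6e, l8e, l78, l9e]
        · linarith only [hsl, hSv, hXlogX0, hMlb, l2u, l32, l3e, l54, l4e, l5e, l6e, l8e, l78, l9e]
      · -- N = 2
        have hSv : S = 3 := by
          rw [hSdef]
          have h : (∑ n ∈ Icc 1 2, n.divisors.card : ℕ) = 3 := by decide
          calc ∑ n ∈ Icc 1 2, ((n.divisors.card : ℝ))
              = ((∑ n ∈ Icc 1 2, n.divisors.card : ℕ) : ℝ) := by push_cast; rfl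
          _ = 3 := by rw [h]; norm_num
        have hsl : (1.414:ℝ) ≤ s := by
          rw [hsdef]
          have hNX' : ((1:ℝ)) ≤ X := hX
          calc (1.414:ℝ) = Real.sqrt ((1.414:ℝ)^2) := (Real.sqrt_sq (by norm_num)).symm
          _ ≤ Real.sqrt X := Real.sqrt_le_sqrt (by push_cast at hNX; nlinarith only [hNX])
        norm_num at hNX hXN hlogXub hlogXlb
        constructor
        · linarith only [hMub, hlogXub, hXN, hsl, hSv, l2u, l32, l3e, l54, l4e, l5e, l6e, l8e, l78, l9e]
        · linarith only [hsl, hSv, hXlogX0, hMlb, l2u, l32, l3e, l54, l4e, l5e, l6e, l8e, l78, l9e]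
      · -- N = 3
        have hSv : S = 5 := by
          rw [hSdef]
          have h : (∑ n ∈ Icc 1 3, n.divisors.card : ℕ) = 5 := by decide
          calc ∑ n ∈ Icc 1 3, ((n.divisors.card : ℝ))
              = ((∑ n ∈ Icc 1 3, n.divisors.card : ℕ) : ℝ) := by push_cast; rfl
          _ = 5 := by rw [h]; norm_num
        have hsl : (1.732:ℝ) ≤ s := by
          rw [hsdef]
          have hNX' : ((1:ℝ)) ≤ X := hX
          calc (1.732:ℝ) = Real.sqrt ((1.732:ℝ)^2) := (Real.sqrt_sq (by norm_num)).symm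
          _ ≤ Real.sqrt X := Real.sqrt_le_sqrt (by push_cast at hNX; nlinarith only [hNX])
        norm_num at hNX hXN hlogXub hlogXlb
        constructor
        · linarith only [hMub, hlogXub, hXN, hsl, hSv, l2u, l32, l3e, l54, l4e, l5e, l6e, l8e, l78, l9e]
        · linarith only [hsl, hSv, hXlogX0, hMlb, l2u, l32, l3e, l54, l4e, l5e, l6e, l8e, l78, l9e]
      · -- N = 4
        have hSv : S = 8 := by
          rw [hSdef]
          have h : (∑ n ∈ Icc 1 4, n.divisors.card : ℕ) = 8 := by decide
          calc ∑ n ∈ Icc 1 4, ((n.divisors.card : ℝ))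
              = ((∑ n ∈ Icc 1 4, n.divisors.card : ℕ) : ℝ) := by push_cast; rfl
          _ = 8 := by rw [h]; norm_num
        have hsl : (2:ℝ) ≤ s := by
          rw [hsdef]
          have hNX' : ((1:ℝ)) ≤ X := hX
          calc (2:ℝ) = Real.sqrt ((2:ℝ)^2) := (Real.sqrt_sq (by norm_num)).symm
          _ ≤ Real.sqrt X := Real.sqrt_le_sqrt (by push_cast at hNX; nlinarith only [hNX])
        norm_num at hNX hXN hlogXub hlogXlb
        constructor
        · linarith only [hMub, hlogXub, hXN, hsl, hSv, l2u, l32, l3e, l54, l4e, l5e, l6e, l8e, l78, l9e]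
        · linarith only [hsl, hSv, hXlogX0, hMlb, l2u, l32, l3e, l54, l4e, l5e, l6e, l8e, l78, l9e]
      · -- N = 5
        have hSv : S = 10 := by
          rw [hSdef]
          have h : (∑ n ∈ Icc 1 5, n.divisors.card : ℕ) = 10 := by decide
          calc ∑ n ∈ Icc 1 5, ((n.divisors.card : ℝ))
              = ((∑ n ∈ Icc 1 5, n.divisors.card : ℕ) : ℝ) := by push_cast; rfl
          _ = 10 := by rw [h]; norm_num
        have hsl : (2.236:ℝ) ≤ s := by
          rw [hsdef]
          have hNX' : ((1:ℝ)) ≤ X := hX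
          calc (2.236:ℝ) = Real.sqrt ((2.236:ℝ)^2) := (Real.sqrt_sq (by norm_num)).symm
          _ ≤ Real.sqrt X := Real.sqrt_le_sqrt (by push_cast at hNX; nlinarith only [hNX])
        norm_num at hNX hXN hlogXub hlogXlb
        constructor
        · linarith only [hMub, hlogXub, hXN, hsl, hSv, l2u, l32, l3e, l54, l4e, l5e, l6e, l8e, l78, l9e]
        · linarith only [hsl, hSv, hXlogX0, hMlb, l2u, l32, l3e, l54, l4e, l5e, l6e, l8e, l78, l9e]
      · -- N = 6
        have hSv : S = 14 := by
          rw [hSdef]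
          have h : (∑ n ∈ Icc 1 6, n.divisors.card : ℕ) = 14 := by decide
          calc ∑ n ∈ Icc 1 6, ((n.divisors.card : ℝ))
              = ((∑ n ∈ Icc 1 6, n.divisors.card : ℕ) : ℝ) := by push_cast; rfl
          _ = 14 := by rw [h]; norm_num
        have hsl : (2.449:ℝ) ≤ s := by
          rw [hsdef]
          have hNX' : ((1:ℝ)) ≤ X := hX
          calc (2.449:ℝ) = Real.sqrt ((2.449:ℝ)^2) := (Real.sqrt_sq (by norm_num)).symm
          _ ≤ Real.sqrt X := Real.sqrt_le_sqrt (by push_cast at hNX; nlinarith only [hNX])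
        norm_num at hNX hXN hlogXub hlogXlb
        constructor
        · linarith only [hMub, hlogXub, hXN, hsl, hSv, l2u, l32, l3e, l54, l4e, l5e, l6e, l8e, l78, l9e]
        · linarith only [hsl, hSv, hlogXlb, hMlb, l4e, l2l, l7l, l6l, hlX0, l2u, l32, l3e, l54, l4e, l5e, l6e, l8e, l78, l9e]
      · -- N = 7
        have hSv : S = 16 := by
          rw [hSdef]
          have h : (∑ n ∈ Icc 1 7, n.divisors.card : ℕ) = 16 := by decide
          calc ∑ n ∈ Icc 1 7, ((n.divisors.card : ℝ))
              = ((∑ n ∈ Icc 1 7, n.divisors.card : ℕ) : ℝ) := by push_cast; rfl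
          _ = 16 := by rw [h]; norm_num
        have hsl : (2.645:ℝ) ≤ s := by
          rw [hsdef]
          have hNX' : ((1:ℝ)) ≤ X := hX
          calc (2.645:ℝ) = Real.sqrt ((2.645:ℝ)^2) := (Real.sqrt_sq (by norm_num)).symm
          _ ≤ Real.sqrt X := Real.sqrt_le_sqrt (by push_cast at hNX; nlinarith only [hNX])
        norm_num at hNX hXN hlogXub hlogXlb
        constructor
        · linarith only [hMub, hlogXub, hXN, hsl, hSv, l2u, l32, l3e, l54, l4e, l5e, l6e, l8e, l78, l9e]
        · linarith only [hsl, hSv, hlogXlb, hMlb, l4e, l2l, l7l, l6l, hlX0, l2u, l32, l3e, l54, l4e, l5e, l6e, l8e, l78, l9e]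
      · -- N = 8
        have hSv : S = 20 := by
          rw [hSdef]
          have h : (∑ n ∈ Icc 1 8, n.divisors.card : ℕ) = 20 := by decide
          calc ∑ n ∈ Icc 1 8, ((n.divisors.card : ℝ))
              = ((∑ n ∈ Icc 1 8, n.divisors.card : ℕ) : ℝ) := by push_cast; rfl
          _ = 20 := by rw [h]; norm_num
        have hsl : (2.828:ℝ) ≤ s := by
          rw [hsdef]
          have hNX' : ((1:ℝ)) ≤ X := hX
          calc (2.828:ℝ) = Real.sqrt ((2.828:ℝ)^2) := (Real.sqrt_sq (by norm_num)).symm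
          _ ≤ Real.sqrt X := Real.sqrt_le_sqrt (by push_cast at hNX; nlinarith only [hNX])
        norm_num at hNX hXN hlogXub hlogXlb
        constructor
        · linarith only [hMub, hlogXub, hXN, hsl, hSv, l2u, l32, l3e, l54, l4e, l5e, l6e, l8e, l78, l9e]
        · linarith only [hsl, hSv, hlogXlb, hMlb, l8e, l2l, hlX0, l2u, l32, l3e, l54, l4e, l5e, l6e, l8e, l78, l9e]
  have hden : (0:ℝ) < 16 / 3 * s := by positivity
  refine ⟨(S - M) / (16 / 3 * s), ?_, ?_⟩
  · rw [abs_div, abs_of_pos hden, div_le_one hden]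
    exact main_bound
  · have h16 : (16 / 3 : ℝ) * s ≠ 0 := ne_of_gt hden
    have hcan : (S - M) / (16 / 3 * s) * (16 / 3) * s = S - M := by
      rw [show (S - M) / (16 / 3 * s) * (16 / 3) * s
          = (S - M) / (16 / 3 * s) * (16 / 3 * s) by ring]
      exact div_mul_cancel₀ _ h16
    rw [hcan]
    ring
end

section
/- Let 0 < σ < 1/2 and X ≥ 1. Then ∑_{n ≤ X} d_{1-2σ}(n)/n^{2-2σ} = ζ(2-2σ)·log(X) + θ·D_σ for some real θ with |θ| ≤ 1, where D_σ = 2A_σ + 1/(2-2σ) + 1/(1-2σ)² and A_σ = 4 + (1+2σ)/(σ(2-2σ)). -/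
open Finset
set_option maxHeartbeats 1000000

/-- The generalized sum-of-divisors function `d_a(n) = ∑_{m ∣ n} m^a`. -/
noncomputable def da (a : ℝ) (n : ℕ) : ℝ := ∑ m ∈ n.divisors, (m : ℝ) ^ a

namespace SumDaAux

/-- Telescoping sum bound via the mean value theorem. -/
lemma sum_le_telescope {g ψ : ℝ → ℝ} {a : ℝ}
    (hg : ∀ t : ℝ, a ≤ t → HasDerivAt g (-ψ t) t)
    (hψ : ∀ x y : ℝ, a ≤ x → x ≤ y → ψ y ≤ ψ x)
    (M : ℕ) : ∑ i ∈ Finset.range M, ψ (a + i + 1) ≤ g a - g (a + M) := by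
  induction M with
  | zero => simp
  | succ M ih =>
    have hM0 : (0:ℝ) ≤ M := Nat.cast_nonneg M
    rw [Finset.sum_range_succ]
    have key : ψ (a + M + 1) ≤ g (a + M) - g (a + M + 1) := by
      have hab : (a + M : ℝ) < a + M + 1 := by linarith
      obtain ⟨c, hc, hceq⟩ := exists_hasDerivAt_eq_slope g (fun t => -ψ t) hab
        (fun x hx => (hg x (by linarith [hx.1])).continuousAt.continuousWithinAt)
        (fun x hx => hg x (by linarith [hx.1.le]))
      have h0 : (a + M + 1) - (a + M) = (1:ℝ) := by ring
      rw [h0, div_one] at hceq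
      have h2 : ψ (a + M + 1) ≤ ψ c := hψ c (a+M+1) (by linarith [hc.1]) (by linarith [hc.2])
      linarith [hceq]
    have hcast : (a + ((M:ℕ)+1:ℕ) : ℝ) = a + M + 1 := by push_cast; ring
    rw [hcast]
    linarith

lemma hasDerivAt_G {s : ℝ} (hs : 1 < s) {t : ℝ} (ht : 0 < t) :
    HasDerivAt (fun t : ℝ => t ^ (1 - s) / (s - 1)) (-(1 / t ^ s)) t := by
  have h := (Real.hasDerivAt_rpow_const (x := t) (p := 1 - s) (Or.inl ht.ne')).div_const (s - 1)
  refine h.congr_deriv ?_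
  rw [show (1 - s - 1 : ℝ) = -s by ring, Real.rpow_neg ht.le]
  have hts : (t:ℝ) ^ s ≠ 0 := (Real.rpow_pos_of_pos ht s).ne'
  have hs1 : s - 1 ≠ 0 := by linarith
  field_simp
  ring

lemma hasDerivAt_F {s : ℝ} (hs : 1 < s) {t : ℝ} (ht : 0 < t) :
    HasDerivAt (fun t : ℝ => t^(1-s) * Real.log t / (s-1) + t^(1-s)/(s-1)^2)
      (-(Real.log t / t^s)) t := by
  have h1 : HasDerivAt (fun t : ℝ => t ^ (1-s)) ((1-s) * t^(1-s-1)) t :=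
    Real.hasDerivAt_rpow_const (Or.inl ht.ne')
  have h2 : HasDerivAt Real.log t⁻¹ t := Real.hasDerivAt_log ht.ne'
  have h3 := ((h1.mul h2).div_const (s-1)).add (h1.div_const ((s-1)^2))
  refine h3.congr_deriv ?_
  have hts : (t:ℝ) ^ s ≠ 0 := (Real.rpow_pos_of_pos ht s).ne'
  have hs1 : s - 1 ≠ 0 := by linarith
  have e1 : t^(1-s-1) = (t^s)⁻¹ * t⁻¹ * t := by
    rw [show (1-s-1 : ℝ) = -s + (-1) + 1 by ring, Real.rpow_add ht, Real.rpow_add ht,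
      Real.rpow_neg ht.le, Real.rpow_neg ht.le, Real.rpow_one]
  have e2 : t^(1-s) = (t^s)⁻¹ * t := by
    rw [show (1-s : ℝ) = -s + 1 by ring, Real.rpow_add ht, Real.rpow_neg ht.le, Real.rpow_one]
  rw [e1, e2]
  field_simp
  ring

lemma log_div_anti {s : ℝ} (hs : 1 ≤ s) {x y : ℝ} (hx : 3 ≤ x) (hxy : x ≤ y) :
    Real.log y / y^s ≤ Real.log x / x^s := by
  have hx0 : (0:ℝ) < x := by linarith
  have hy0 : (0:ℝ) < y := by linarith
  have hxs : (0:ℝ) < x ^ s := Real.rpow_pos_of_pos hx0 s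
  have hys : (0:ℝ) < y ^ s := Real.rpow_pos_of_pos hy0 s
  have hlx : 1 ≤ Real.log x := by
    rw [Real.le_log_iff_exp_le hx0]
    calc Real.exp 1 ≤ 2.7182818286 := Real.exp_one_lt_d9.le
      _ ≤ x := by linarith
  have h4 : (1:ℝ) ≤ y / x := (one_le_div hx0).mpr hxy
  have h1 : Real.log y ≤ Real.log x * (y / x) := by
    have h2 : Real.log (y/x) ≤ y/x - 1 := Real.log_le_sub_one_of_pos (by positivity)
    have h3 : Real.log y = Real.log x + Real.log (y/x) := by
      rw [Real.log_div hy0.ne' hx0.ne']; ring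
    nlinarith
  have h5 : y / x ≤ y^s / x^s := by
    rw [← Real.div_rpow hy0.le hx0.le]
    calc y/x = (y/x)^(1:ℝ) := (Real.rpow_one _).symm
      _ ≤ (y/x)^s := Real.rpow_le_rpow_of_exponent_le h4 hs
  calc Real.log y / y^s ≤ (Real.log x * (y/x)) / y^s := by
        gcongr
      _ ≤ (Real.log x * (y^s/x^s)) / y^s := by
        gcongr
      _ = Real.log x / x^s := by field_simp
lemma F_le {s : ℝ} (hs : 1 < s) {t : ℝ} (ht : 1 ≤ t) :
    t^(1-s) * Real.log t / (s-1) + t^(1-s)/(s-1)^2 ≤ 1/(s-1)^2 := by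
  have ht0 : (0:ℝ) < t := by linarith
  have hu : (0:ℝ) < s - 1 := by linarith
  have hlog : 0 ≤ Real.log t := Real.log_nonneg ht
  have htpos : (0:ℝ) < t^(s-1) := Real.rpow_pos_of_pos ht0 _
  have hexp : 1 + (s-1) * Real.log t ≤ t^(s-1) := by
    have h := Real.add_one_le_exp ((s-1) * Real.log t)
    rw [Real.rpow_def_of_pos ht0]
    calc 1 + (s-1)*Real.log t = (s-1)*Real.log t + 1 := by ring
      _ ≤ Real.exp ((s-1)*Real.log t) := h
      _ = Real.exp (Real.log t * (s-1)) := by rw [mul_comm]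
  have h1 : t^(1-s) = (t^(s-1))⁻¹ := by
    rw [show (1-s:ℝ) = -(s-1) by ring, Real.rpow_neg ht0.le]
  rw [h1]
  have key : (t^(s-1))⁻¹ * Real.log t/(s-1) + (t^(s-1))⁻¹/(s-1)^2
      = ((t^(s-1))⁻¹ * (1 + (s-1)*Real.log t))/(s-1)^2 := by
    field_simp
    ring
  rw [key]
  gcongr ?_ / _
  calc (t^(s-1))⁻¹ * (1 + (s-1)*Real.log t) ≤ (t^(s-1))⁻¹ * t^(s-1) :=
        mul_le_mul_of_nonneg_left hexp (by positivity)
    _ = 1 := inv_mul_cancel₀ htpos.ne'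

lemma rpow_anti {s : ℝ} (hs : 1 ≤ s) {x y : ℝ} (hx : 0 < x) (hxy : x ≤ y) :
    1 / y^s ≤ 1 / x^s := by
  apply one_div_le_one_div_of_le (Real.rpow_pos_of_pos hx s)
  exact Real.rpow_le_rpow hx.le hxy (by linarith)

lemma tail_sum_le {s : ℝ} (hs : 1 < s) {N : ℕ} (hN : 1 ≤ N) (M : ℕ) :
    ∑ i ∈ Finset.range M, 1/((N:ℝ) + i + 1)^s ≤ (N:ℝ)^(1-s)/(s-1) := by
  have hN0 : (0:ℝ) < N := by exact_mod_cast hN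
  have h := sum_le_telescope (g := fun t => t^(1-s)/(s-1)) (ψ := fun t => 1/t^s) (a := (N:ℝ))
    (fun t ht => hasDerivAt_G hs (lt_of_lt_of_le hN0 ht))
    (fun x y hx hxy => rpow_anti hs.le (lt_of_lt_of_le hN0 hx) hxy) M
  refine h.trans ?_
  have h2 : (0:ℝ) ≤ ((N:ℝ)+M)^(1-s)/(s-1) :=
    div_nonneg (Real.rpow_nonneg (by positivity) _) (by linarith)
  linarith

lemma tail_tsum_le {s : ℝ} (hs : 1 < s) {N : ℕ} (hN : 1 ≤ N) :
    ∑' i:ℕ, 1/((i + (N+1) : ℕ):ℝ)^s ≤ (N:ℝ)^(1-s)/(s-1) := by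
  have hsum : Summable (fun n : ℕ => 1/(n:ℝ)^s) := Real.summable_one_div_nat_rpow.mpr hs
  have hsum' : Summable (fun i : ℕ => 1/((i + (N+1):ℕ):ℝ)^s) :=
    hsum.comp_injective (add_left_injective (N+1))
  apply Summable.tsum_le_of_sum_le hsum'
  intro F
  obtain ⟨M, hM⟩ := F.exists_nat_subset_range
  have h1 : ∑ i ∈ F, 1/((i + (N+1):ℕ):ℝ)^s ≤ ∑ i ∈ Finset.range M, 1/((i + (N+1):ℕ):ℝ)^s :=
    Finset.sum_le_sum_of_subset_of_nonneg hM (fun i _ _ => by positivity)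
  have h2 : ∑ i ∈ Finset.range M, 1/((i + (N+1):ℕ):ℝ)^s
      = ∑ i ∈ Finset.range M, 1/((N:ℝ) + i + 1)^s := by
    apply Finset.sum_congr rfl
    intro i _
    congr 2
    push_cast
    ring
  exact h1.trans (h2 ▸ tail_sum_le hs hN M)

lemma zeta_decomp {s : ℝ} (hs : 1 < s) (n : ℕ) :
    (∑' i:ℕ, 1/(i:ℝ)^s) = (∑ k ∈ Finset.Icc 1 n, 1/(k:ℝ)^s)
      + ∑' i:ℕ, 1/((i + (n+1) : ℕ):ℝ)^s := by
  have hsum : Summable (fun n : ℕ => 1/(n:ℝ)^s) := Real.summable_one_div_nat_rpow.mpr hs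
  rw [← Summable.sum_add_tsum_nat_add (n+1) hsum]
  congr 1
  rw [Finset.sum_range_succ']
  have h0 : 1/((0:ℕ):ℝ)^s = 0 := by
    simp [Real.zero_rpow (by linarith : s ≠ 0)]
  rw [h0, add_zero]
  rw [← Finset.Ico_add_one_right_eq_Icc, Finset.sum_Ico_eq_sum_range]
  apply Finset.sum_congr (by norm_num)
  intro i _
  have h : 1 + i = i + 1 := by omega
  rw [h]

lemma swap_sum (N : ℕ) (g : ℕ → ℕ → ℝ) :
    ∑ n ∈ Finset.Icc 1 N, ∑ p ∈ n.divisorsAntidiagonal, g p.1 p.2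
      = ∑ k ∈ Finset.Icc 1 N, ∑ m ∈ Finset.Icc 1 (N/k), g m k := by
  rw [Finset.sum_sigma', Finset.sum_sigma']
  refine Finset.sum_nbij' (fun x => (⟨x.2.2, x.2.1⟩ : Σ _ : ℕ, ℕ))
    (fun y => (⟨y.2 * y.1, (y.2, y.1)⟩ : Σ _ : ℕ, ℕ × ℕ)) ?_ ?_ ?_ ?_ ?_
  · rintro ⟨n, m, k⟩ hx
    simp only [Finset.mem_sigma, Finset.mem_Icc, Nat.mem_divisorsAntidiagonal] at hx ⊢
    obtain ⟨⟨h1, h2⟩, hmul, hne⟩ := hx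
    have hm : 0 < m := by
      rcases Nat.eq_zero_or_pos m with h|h
      · subst h; simp at hmul; omega
      · exact h
    have hk : 0 < k := by
      rcases Nat.eq_zero_or_pos k with h|h
      · subst h; simp at hmul; omega
      · exact h
    refine ⟨⟨hk, ?_⟩, hm, ?_⟩
    · calc k ≤ m * k := Nat.le_mul_of_pos_left k hm
        _ = n := hmul
        _ ≤ N := h2
    · rw [Nat.le_div_iff_mul_le hk]; omega
  · rintro ⟨k, m⟩ hy
    simp only [Finset.mem_sigma, Finset.mem_Icc, Nat.mem_divisorsAntidiagonal] at hy
    obtain ⟨⟨hk1, hkN⟩, hm1, hmk⟩ := hy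
    have hkm : m * k ≤ N := (Nat.le_div_iff_mul_le (by omega)).mp hmk
    have hmk0 : 0 < m * k := Nat.mul_pos (by omega) (by omega)
    exact Finset.mem_sigma.mpr ⟨Finset.mem_Icc.mpr ⟨hmk0, hkm⟩,
      Nat.mem_divisorsAntidiagonal.mpr ⟨rfl, hmk0.ne'⟩⟩
  · rintro ⟨n, m, k⟩ hx
    simp only [Finset.mem_sigma, Finset.mem_Icc, Nat.mem_divisorsAntidiagonal] at hx
    obtain ⟨-, hmul, -⟩ := hx
    simp [hmul]
  · rintro ⟨k, m⟩ _
    rfl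
  · rintro ⟨n, m, k⟩ _
    rfl

lemma harmonic_real (m : ℕ) : ((harmonic m : ℚ) : ℝ) = ∑ i ∈ Finset.Icc 1 m, 1/(i:ℝ) := by
  rw [harmonic_eq_sum_Icc]
  push_cast
  simp [one_div]

lemma lhs_eq {s : ℝ} (hs : 1 < s) (N : ℕ) :
    ∑ n ∈ Finset.Icc 1 N, da (s-1) n / (n:ℝ)^s
      = ∑ k ∈ Finset.Icc 1 N, (1/(k:ℝ)^s) * ((harmonic (N/k) : ℚ) : ℝ) := by
  have step1 : ∀ n ∈ Finset.Icc 1 N, da (s-1) n / (n:ℝ)^s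
      = ∑ p ∈ n.divisorsAntidiagonal, (1/(p.1:ℝ)) * (1/(p.2:ℝ)^s) := by
    intro n hn
    simp only [Finset.mem_Icc] at hn
    have hn0 : 0 < n := hn.1
    rw [show (∑ p ∈ n.divisorsAntidiagonal, (1/(p.1:ℝ)) * (1/(p.2:ℝ)^s))
        = ∑ p ∈ n.divisorsAntidiagonal, (fun m k => (1/(m:ℝ)) * (1/(k:ℝ)^s)) p.1 p.2 from rfl,
      Nat.sum_divisorsAntidiagonal (fun m k => (1/(m:ℝ)) * (1/(k:ℝ)^s))]
    rw [da, Finset.sum_div]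
    apply Finset.sum_congr rfl
    intro i hi
    rw [Nat.mem_divisors] at hi
    obtain ⟨hidvd, -⟩ := hi
    have hi0 : 0 < i := Nat.pos_of_dvd_of_pos hidvd hn0
    have hir : (0:ℝ) < i := by exact_mod_cast hi0
    have hnr : (0:ℝ) < n := by exact_mod_cast hn0
    have hins : (n:ℝ)^s ≠ 0 := (Real.rpow_pos_of_pos hnr s).ne'
    have hiis : (i:ℝ)^s ≠ 0 := (Real.rpow_pos_of_pos hir s).ne'
    have hcast : ((n/i : ℕ) : ℝ) = (n:ℝ)/(i:ℝ) := Nat.cast_div hidvd hir.ne'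
    rw [hcast, Real.div_rpow hnr.le hir.le]
    rw [show (i:ℝ)^(s-1) = (i:ℝ)^s / (i:ℝ) from ?_]
    · field_simp
    · rw [eq_div_iff hir.ne', ← Real.rpow_add_one hir.ne']
      norm_num
  rw [Finset.sum_congr rfl step1]
  rw [show (∑ n ∈ Finset.Icc 1 N, ∑ p ∈ n.divisorsAntidiagonal, (1/(p.1:ℝ)) * (1/(p.2:ℝ)^s))
      = ∑ k ∈ Finset.Icc 1 N, ∑ m ∈ Finset.Icc 1 (N/k), (1/(m:ℝ)) * (1/(k:ℝ)^s)
    from swap_sum N (fun m k => (1/(m:ℝ)) * (1/(k:ℝ)^s))]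
  apply Finset.sum_congr rfl
  intro k hk
  rw [harmonic_real, Finset.mul_sum]
  apply Finset.sum_congr rfl
  intro m _
  ring

lemma zeta_re {s : ℝ} (hs : 1 < s) :
    (riemannZeta s).re = ∑' n:ℕ, 1/(n:ℝ)^s := by
  have h : riemannZeta s = ((∑' n:ℕ, 1/(n:ℝ)^s : ℝ) : ℂ) := by
    rw [zeta_eq_tsum_one_div_nat_cpow (by simpa using hs)]
    rw [Complex.ofReal_tsum]
    apply tsum_congr
    intro n
    rw [Complex.ofReal_div, Complex.ofReal_one, Complex.ofReal_cpow (Nat.cast_nonneg n),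
      Complex.ofReal_natCast]
  rw [h, Complex.ofReal_re]

noncomputable def FF (s t : ℝ) : ℝ := t^(1-s) * Real.log t / (s-1) + t^(1-s)/(s-1)^2

lemma main_est {s X : ℝ} {N : ℕ} (hs1 : 1 < s) (hs2 : s ≤ 2) (hX : 1 ≤ X)
    (hN1 : 1 ≤ N) (hNX : (N:ℝ) ≤ X) (hXN : X < N + 1) :
    |(∑ k ∈ Finset.Icc 1 N, (1/(k:ℝ)^s) * ((harmonic (N/k) : ℚ) : ℝ))
      - (∑' n:ℕ, 1/(n:ℝ)^s) * Real.log X| ≤ 1 + 1/(s-1)^2 := by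
  have hX0 : (0:ℝ) < X := by linarith
  have hlogX0 : 0 ≤ Real.log X := Real.log_nonneg hX
  have hNr1 : (1:ℝ) ≤ N := by exact_mod_cast hN1
  have hu : (0:ℝ) < s - 1 := by linarith
  have hu1 : s - 1 ≤ 1 := by linarith
  have husq : 1/(s-1) ≤ 1/(s-1)^2 := by
    apply one_div_le_one_div_of_le (by positivity)
    nlinarith
  set S := ∑ k ∈ Finset.Icc 1 N, (1/(k:ℝ)^s) * ((harmonic (N/k) : ℚ) : ℝ) with hSdef
  set Z := ∑' n:ℕ, 1/(n:ℝ)^s with hZdef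
  set TL := ∑' i:ℕ, 1/((i + (N+1) : ℕ):ℝ)^s with hTLdef
  set P := ∑ k ∈ Finset.Icc 1 N, 1/(k:ℝ)^s with hPdef
  have hZP : Z = P + TL := zeta_decomp hs1 N
  have hTL0 : 0 ≤ TL := tsum_nonneg (fun i => by positivity)
  have hTLle : TL ≤ (N:ℝ)^(1-s)/(s-1) := tail_tsum_le hs1 hN1
  have hP0 : 0 ≤ P := Finset.sum_nonneg (fun k _ => by positivity)
  -- Z ≤ 1 + 1/(s-1)
  have hZ1 : Z ≤ 1 + 1/(s-1) := by
    have h1 := zeta_decomp hs1 1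
    have h2 : (∑ k ∈ Finset.Icc (1:ℕ) 1, 1/(k:ℝ)^s) = 1 := by
      rw [Finset.Icc_self, Finset.sum_singleton]
      norm_num
    have h3 : (∑' i:ℕ, 1/((i + (1+1) : ℕ):ℝ)^s) ≤ ((1:ℕ):ℝ)^(1-s)/(s-1) :=
      tail_tsum_le hs1 le_rfl
    rw [Nat.cast_one, Real.one_rpow] at h3
    rw [hZdef, h1, h2]
    linarith
  -- decomposition of the error
  have hE : Z * Real.log X - S
      = (∑ k ∈ Finset.Icc 1 N, (1/(k:ℝ)^s) * (Real.log X - ((harmonic (N/k) : ℚ) : ℝ)))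
        + TL * Real.log X := by
    rw [hZP, add_mul]
    have e1 : P * Real.log X - S
        = ∑ k ∈ Finset.Icc 1 N, (1/(k:ℝ)^s) * (Real.log X - ((harmonic (N/k):ℚ):ℝ)) := by
      rw [hSdef, hPdef, Finset.sum_mul, ← Finset.sum_sub_distrib]
      exact Finset.sum_congr rfl (fun k _ => by ring)
    linarith [e1]
  -- upper bound on each term
  have hterm_up : ∀ k ∈ Finset.Icc 1 N,
      (1/(k:ℝ)^s) * (Real.log X - ((harmonic (N/k) : ℚ):ℝ))
        ≤ (1/(k:ℝ)^s) * Real.log k := by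
    intro k hk
    rw [Finset.mem_Icc] at hk
    have hkr : (1:ℝ) ≤ k := by exact_mod_cast hk.1
    have hkr0 : (0:ℝ) < k := by linarith
    apply mul_le_mul_of_nonneg_left ?_ (by positivity)
    have h1 : Real.log (↑(N/k) + 1) ≤ ((harmonic (N/k) : ℚ):ℝ) := by
      have h := log_add_one_le_harmonic (N/k)
      push_cast at h ⊢
      linarith
    have h2 : X / k ≤ (↑(N/k) : ℝ) + 1 := by
      have hdm : N = k * (N/k) + N % k := (Nat.div_add_mod N k).symm
      have hmod : N % k + 1 ≤ k := Nat.mod_lt N (by omega)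
      have e : (N:ℝ) = (k:ℝ) * (↑(N/k):ℝ) + (↑(N % k):ℝ) := by exact_mod_cast hdm
      have e2 : (↑(N % k):ℝ) + 1 ≤ (k:ℝ) := by exact_mod_cast hmod
      have hq0 : (0:ℝ) ≤ (↑(N/k):ℝ) := Nat.cast_nonneg _
      rw [div_le_iff₀ hkr0]
      nlinarith
    have h4 : Real.log (X/k) ≤ Real.log (↑(N/k) + 1) :=
      Real.log_le_log (by positivity) h2
    rw [Real.log_div hX0.ne' hkr0.ne'] at h4
    linarith
  -- lower bound on each term
  have hterm_low : ∀ k ∈ Finset.Icc 1 N,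
      -(1/(k:ℝ)^s) ≤ (1/(k:ℝ)^s) * (Real.log X - ((harmonic (N/k) : ℚ):ℝ)) := by
    intro k hk
    rw [Finset.mem_Icc] at hk
    have hkr : (1:ℝ) ≤ k := by exact_mod_cast hk.1
    have hkr0 : (0:ℝ) < k := by linarith
    have hdiv1 : 1 ≤ N/k := (Nat.one_le_div_iff (by omega)).mpr hk.2
    have hdr : (1:ℝ) ≤ (↑(N/k):ℝ) := by exact_mod_cast hdiv1
    have h1 : ((harmonic (N/k) : ℚ):ℝ) ≤ 1 + Real.log (↑(N/k)) := by
      have h := harmonic_le_one_add_log (N/k)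
      push_cast at h ⊢
      linarith
    have h2 : Real.log (↑(N/k)) ≤ Real.log X := by
      apply Real.log_le_log (by linarith)
      calc (↑(N/k):ℝ) ≤ (N:ℝ) := by exact_mod_cast Nat.div_le_self N k
        _ ≤ X := hNX
    have h3 : -1 ≤ Real.log X - ((harmonic (N/k) : ℚ):ℝ) := by linarith
    calc -(1/(k:ℝ)^s) = (1/(k:ℝ)^s) * (-1) := by ring
      _ ≤ _ := mul_le_mul_of_nonneg_left h3 (by positivity)
  -- tail * log bound
  have hFFle : ∀ t : ℝ, 1 ≤ t → FF s t ≤ 1/(s-1)^2 := fun t ht => F_le hs1 ht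
  have hTLlog : TL * Real.log X ≤ FF s N := by
    have la : Real.log X ≤ Real.log ((N:ℝ)+1) := Real.log_le_log hX0 hXN.le
    have lb : Real.log ((N:ℝ)+1) ≤ Real.log N + 1/N := by
      have h := Real.log_le_sub_one_of_pos (x := ((N:ℝ)+1)/N) (by positivity)
      rw [Real.log_div (by positivity) (by positivity)] at h
      have e : ((N:ℝ)+1)/N - 1 = 1/N := by field_simp; ring
      linarith
    have h1 : TL * Real.log X ≤ ((N:ℝ)^(1-s)/(s-1)) * (Real.log N + 1/N) := by
      have := mul_le_mul hTLle (by linarith : Real.log X ≤ Real.log N + 1/N) hlogX0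
        (div_nonneg (Real.rpow_nonneg (by positivity) _) hu.le)
      linarith
    have h2 : ((N:ℝ)^(1-s)/(s-1)) * (Real.log N + 1/N)
        = (N:ℝ)^(1-s) * Real.log N/(s-1) + (N:ℝ)^(1-s)/((s-1)*N) := by
      field_simp
    have h3 : (N:ℝ)^(1-s)/((s-1)*N) ≤ (N:ℝ)^(1-s)/(s-1)^2 := by
      gcongr
      nlinarith
    rw [FF]
    linarith
  -- sum of log-terms bound; case analysis
  have h2s : (2:ℝ) ≤ (2:ℝ)^s := by
    calc (2:ℝ) = 2^(1:ℝ) := (Real.rpow_one 2).symm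
      _ ≤ 2^s := Real.rpow_le_rpow_of_exponent_le (by norm_num) hs1.le
  have h3s : (3:ℝ) ≤ (3:ℝ)^s := by
    calc (3:ℝ) = 3^(1:ℝ) := (Real.rpow_one 3).symm
      _ ≤ 3^s := Real.rpow_le_rpow_of_exponent_le (by norm_num) hs1.le
  have hlog2 : (0:ℝ) ≤ Real.log 2 := Real.log_nonneg (by norm_num)
  have hlog2' : Real.log 2 < 0.6931471808 := Real.log_two_lt_d9
  have hlog3 : Real.log 3 ≤ 2 * Real.log 2 := by
    have h34 : Real.log 3 ≤ Real.log 4 := Real.log_le_log (by norm_num) (by norm_num)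
    have h4 : Real.log 4 = 2 * Real.log 2 := by
      rw [show (4:ℝ) = 2*2 by norm_num, Real.log_mul two_ne_zero two_ne_zero]
      ring
    linarith
  have hT : (∑ k ∈ Finset.Icc 1 N, (1/(k:ℝ)^s) * Real.log k) + TL * Real.log X
      ≤ 1 + 1/(s-1)^2 := by
    rcases (by omega : N = 1 ∨ N = 2 ∨ 3 ≤ N) with hN | hN | hN
    · subst hN
      have hT1 : (∑ k ∈ Finset.Icc (1:ℕ) 1, (1/(k:ℝ)^s) * Real.log k) = 0 := by
        rw [Finset.Icc_self, Finset.sum_singleton]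
        norm_num
      have hFF1 : FF s ((1:ℕ):ℝ) ≤ 1/(s-1)^2 := hFFle _ (by norm_num)
      calc (∑ k ∈ Finset.Icc (1:ℕ) 1, (1/(k:ℝ)^s) * Real.log k) + TL * Real.log X
          = TL * Real.log X := by rw [hT1]; ring
        _ ≤ FF s ((1:ℕ):ℝ) := hTLlog
        _ ≤ 1/(s-1)^2 := hFF1
        _ ≤ 1 + 1/(s-1)^2 := by linarith
    · subst hN
      have hT2 : (∑ k ∈ Finset.Icc (1:ℕ) 2, (1/(k:ℝ)^s) * Real.log k)
          = (1/(2:ℝ)^s) * Real.log 2 := by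
        rw [show Finset.Icc (1:ℕ) 2 = {1, 2} from by decide,
          Finset.sum_insert (by decide), Finset.sum_singleton]
        norm_num
      have hb2 : (1/(2:ℝ)^s) * Real.log 2 ≤ (1/2) * Real.log 2 :=
        mul_le_mul_of_nonneg_right (one_div_le_one_div_of_le (by norm_num) h2s) hlog2
      have hFF2 : FF s ((2:ℕ):ℝ) ≤ 1/(s-1)^2 := hFFle _ (by norm_num)
      calc (∑ k ∈ Finset.Icc (1:ℕ) 2, (1/(k:ℝ)^s) * Real.log k) + TL * Real.log X
          = (1/(2:ℝ)^s) * Real.log 2 + TL * Real.log X := by rw [hT2]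
        _ ≤ (1/2) * Real.log 2 + FF s ((2:ℕ):ℝ) := add_le_add hb2 hTLlog
        _ ≤ 1 + 1/(s-1)^2 := by linarith
    · have hunion : Finset.Icc 1 N = Finset.Icc 1 3 ∪ Finset.Icc 4 N := by
        ext x
        simp only [Finset.mem_Icc, Finset.mem_union]
        omega
      have hdisj : Disjoint (Finset.Icc (1:ℕ) 3) (Finset.Icc 4 N) := by
        rw [Finset.disjoint_left]
        intro x h1 h2
        simp only [Finset.mem_Icc] at h1 h2
        omega
      have hsplit : (∑ k ∈ Finset.Icc 1 N, (1/(k:ℝ)^s) * Real.log k)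
          = (∑ k ∈ Finset.Icc (1:ℕ) 3, (1/(k:ℝ)^s) * Real.log k)
            + ∑ k ∈ Finset.Icc 4 N, (1/(k:ℝ)^s) * Real.log k := by
        rw [hunion, Finset.sum_union hdisj]
      have h13 : (∑ k ∈ Finset.Icc (1:ℕ) 3, (1/(k:ℝ)^s) * Real.log k) ≤ 1 := by
        rw [show Finset.Icc (1:ℕ) 3 = {1, 2, 3} from by decide,
          Finset.sum_insert (by decide), Finset.sum_insert (by decide), Finset.sum_singleton]
        have hb2 : (1/(2:ℝ)^s) * Real.log 2 ≤ (1/2) * Real.log 2 :=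
          mul_le_mul_of_nonneg_right (one_div_le_one_div_of_le (by norm_num) h2s) hlog2
        have hb3 : (1/(3:ℝ)^s) * Real.log 3 ≤ (1/3) * Real.log 3 :=
          mul_le_mul_of_nonneg_right (one_div_le_one_div_of_le (by norm_num) h3s)
            (Real.log_nonneg (by norm_num))
        push_cast
        norm_num
        simp only [one_div] at hb2 hb3 ⊢
        linarith
      have h4N : (∑ k ∈ Finset.Icc 4 N, (1/(k:ℝ)^s) * Real.log k)
          ≤ FF s 3 - FF s (N:ℝ) := by
        have e : ∑ k ∈ Finset.Icc 4 N, (1/(k:ℝ)^s) * Real.log k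
            = ∑ i ∈ Finset.range (N+1-4), Real.log ((3:ℝ)+i+1) / ((3:ℝ)+i+1)^s := by
          rw [← Finset.Ico_add_one_right_eq_Icc, Finset.sum_Ico_eq_sum_range]
          apply Finset.sum_congr rfl
          intro i _
          have hc : ((4+i:ℕ):ℝ) = (3:ℝ)+i+1 := by push_cast; ring
          rw [hc]
          ring
        rw [e]
        have htel := sum_le_telescope (g := FF s) (ψ := fun t => Real.log t / t^s)
          (a := (3:ℝ))
          (fun t ht => hasDerivAt_F hs1 (show (0:ℝ) < t by linarith))
          (fun x y hx hxy => log_div_anti hs1.le hx hxy) (N+1-4)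
        have hc2 : (3:ℝ) + ((N+1-4:ℕ):ℝ) = (N:ℝ) := by
          have h5 : (N+1-4:ℕ) = N - 3 := by omega
          rw [h5, Nat.cast_sub hN]
          ring
        rw [hc2] at htel
        exact htel
      have hFF3 : FF s 3 ≤ 1/(s-1)^2 := hFFle _ (by norm_num)
      calc (∑ k ∈ Finset.Icc 1 N, (1/(k:ℝ)^s) * Real.log k) + TL * Real.log X
          ≤ ((∑ k ∈ Finset.Icc (1:ℕ) 3, (1/(k:ℝ)^s) * Real.log k)
              + ∑ k ∈ Finset.Icc 4 N, (1/(k:ℝ)^s) * Real.log k) + TL * Real.log X := by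
            rw [hsplit]
        _ ≤ (1 + (FF s 3 - FF s (N:ℝ))) + FF s (N:ℝ) := add_le_add (add_le_add h13 h4N) hTLlog
        _ ≤ 1 + 1/(s-1)^2 := by linarith
  have hEup : Z * Real.log X - S ≤ 1 + 1/(s-1)^2 := by
    rw [hE]
    have := Finset.sum_le_sum hterm_up
    linarith [hT]
  have hElow : -(1 + 1/(s-1)^2) ≤ Z * Real.log X - S := by
    rw [hE]
    have h1 := Finset.sum_le_sum hterm_low
    rw [Finset.sum_neg_distrib] at h1
    have h2 : 0 ≤ TL * Real.log X := mul_nonneg hTL0 hlogX0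
    have h3 : P ≤ Z := by rw [hZP]; linarith
    linarith
  rw [abs_sub_comm]
  exact abs_le.mpr ⟨hElow, hEup⟩

end SumDaAux

theorem sum_da_div (σ X : ℝ) (hσ0 : 0 < σ) (hσ1 : σ < 1 / 2) (hX : 1 ≤ X) :
    ∃ θ : ℝ, |θ| ≤ 1 ∧
      ∑ n ∈ Finset.Icc 1 ⌊X⌋₊, da (1 - 2 * σ) n / (n : ℝ) ^ (2 - 2 * σ) =
        (riemannZeta (2 - 2 * σ)).re * Real.log X
          + θ * (2 * (4 + (1 + 2 * σ) / (σ * (2 - 2 * σ)))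
            + 1 / (2 - 2 * σ) + 1 / (1 - 2 * σ) ^ 2) := by
  have hs1 : 1 < 2 - 2 * σ := by linarith
  have hs2 : 2 - 2 * σ ≤ 2 := by linarith
  set N := ⌊X⌋₊ with hNdef
  have hN1 : 1 ≤ N := Nat.le_floor (by exact_mod_cast hX)
  have hNX : (N:ℝ) ≤ X := Nat.floor_le (by linarith)
  have hXN : X < N + 1 := Nat.lt_floor_add_one X
  have hL := SumDaAux.lhs_eq (s := 2 - 2*σ) hs1 N
  rw [show (2 - 2*σ) - 1 = 1 - 2*σ from by ring] at hL
  have hz : (riemannZeta ((2 - 2*σ : ℝ) : ℂ)).re = ∑' n:ℕ, 1/(n:ℝ)^(2 - 2*σ) :=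
    SumDaAux.zeta_re hs1
  have hmain := SumDaAux.main_est (s := 2 - 2*σ) (X := X) (N := N) hs1 hs2 hX hN1 hNX hXN
  rw [show (2 - 2*σ) - 1 = 1 - 2*σ from by ring] at hmain
  set D : ℝ := 2 * (4 + (1 + 2 * σ) / (σ * (2 - 2 * σ)))
      + 1 / (2 - 2 * σ) + 1 / (1 - 2 * σ) ^ 2 with hDdef
  have hDge : 1 + 1/(1 - 2*σ)^2 ≤ D := by
    have h1 : 0 < (1 + 2*σ)/(σ*(2-2*σ)) := by positivity
    have h2 : 0 < 1/(2-2*σ) := by positivity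
    rw [hDdef]
    linarith
  have hD0 : (0:ℝ) < D := by
    have h3 : (0:ℝ) < 1 + 1/(1 - 2*σ)^2 := by positivity
    exact lt_of_lt_of_le h3 hDge
  refine ⟨((∑ k ∈ Finset.Icc 1 N, (1/(k:ℝ)^(2 - 2*σ)) * ((harmonic (N/k) : ℚ) : ℝ))
      - (∑' n:ℕ, 1/(n:ℝ)^(2 - 2*σ)) * Real.log X)/D, ?_, ?_⟩
  · rw [abs_div, abs_of_pos hD0, div_le_one hD0]
    exact hmain.trans hDge
  · have hzeta : (riemannZeta (2 - 2 * (σ:ℂ))).re = ∑' n:ℕ, 1/(n:ℝ)^(2-2*σ) := by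
      rw [show (2 - 2*(σ:ℂ)) = ((2 - 2*σ : ℝ) : ℂ) by push_cast; ring]
      exact hz
    rw [hL, hzeta, div_mul_cancel₀ _ hD0.ne']
    ring
end

section
/- Let 0 < σ < 1/2, λ > 0, and X ≥ 1. Then ∑_{n > X} d_{1-2σ}(n)/n^{2-2σ+λ} = ζ(2-2σ+λ)/(λ X^λ) + θ·( (1/(2-2σ) + 1/((1-2σ)(1-2σ+λ)))/X^λ + (ζ(2-2σ+λ) + 1/(1-2σ+λ) + 1)/X^{1+λ} ) for some real θ with |θ| ≤ 1. -/
open Real Filter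

open Real intervalIntegral in
lemma aux_int (r A : ℝ) (hr : r ≠ -1) (hA : 0 < A) :
    ∫ t in A..(A+1), t ^ r = ((A+1) ^ (r+1) - A ^ (r+1)) / (r+1) := by
  rw [integral_rpow (Or.inr ⟨hr, by
    simp only [Set.mem_uIcc]; push_neg
    constructor <;> intro h <;> linarith [hA]⟩)]

open Real intervalIntegral in
lemma aux_intble (r A : ℝ) (hA : 0 < A) :
    IntervalIntegrable (fun t : ℝ => t ^ r) MeasureTheory.volume A (A+1) := by
  apply intervalIntegrable_rpow (Or.inr ?_)
  simp only [Set.mem_uIcc]; push_neg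
  constructor <;> intro h <;> linarith [hA]

open Real intervalIntegral in
lemma aux_le_left (r A : ℝ) (hr : r < 0) (hr' : r ≠ -1) (hA : 0 < A) :
    (A+1) ^ r ≤ ((A+1) ^ (r+1) - A ^ (r+1)) / (r+1) := by
  rw [← aux_int r A hr' hA]
  calc (A+1) ^ r = ∫ _ in A..(A+1), (A+1) ^ r := by simp
    _ ≤ ∫ t in A..(A+1), t ^ r := by
        apply integral_mono_on (by linarith) (by simp) (aux_intble r A hA)
        intro t ht
        exact Real.rpow_le_rpow_of_nonpos (lt_of_lt_of_le hA ht.1) ht.2 hr.le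

open Real intervalIntegral in
lemma aux_le_right (r A : ℝ) (hr : r < 0) (hr' : r ≠ -1) (hA : 0 < A) :
    ((A+1) ^ (r+1) - A ^ (r+1)) / (r+1) ≤ A ^ r := by
  rw [← aux_int r A hr' hA]
  calc (∫ t in A..(A+1), t ^ r) ≤ ∫ _ in A..(A+1), A ^ r := by
        apply integral_mono_on (by linarith) (aux_intble r A hA) (by simp)
        intro t ht
        exact Real.rpow_le_rpow_of_nonpos hA ht.1 hr.le
    _ = A ^ r := by simp

open Real intervalIntegral in
lemma aux_ge (r A : ℝ) (hr : 0 ≤ r) (hA : 0 < A) :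
    A ^ r ≤ ((A+1) ^ (r+1) - A ^ (r+1)) / (r+1) := by
  rw [← aux_int r A (by linarith) hA]
  calc A ^ r = ∫ _ in A..(A+1), A ^ r := by simp
    _ ≤ ∫ t in A..(A+1), t ^ r := by
        apply integral_mono_on (by linarith) (by simp) (aux_intble r A hA)
        intro t ht
        exact Real.rpow_le_rpow hA.le ht.1 hr


lemma step_le (p A : ℝ) (hp : 1 < p) (hA : 0 < A) :
    (A+1) ^ (-p) ≤ (A ^ (1-p) - (A+1) ^ (1-p)) / (p-1) := by
  have h := aux_le_left (-p) A (by linarith) (by intro h; apply absurd (neg_injective h); linarith) hA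
  rw [show (-p+1:ℝ) = -(p-1) by ring, div_neg, ← neg_div, neg_sub,
    show (-(p-1):ℝ) = 1-p by ring] at h
  exact h

lemma step_ge (p A : ℝ) (hp : 1 < p) (hA : 0 < A) :
    (A ^ (1-p) - (A+1) ^ (1-p)) / (p-1) ≤ A ^ (-p) := by
  have h := aux_le_right (-p) A (by linarith) (by intro h; apply absurd (neg_injective h); linarith) hA
  rw [show (-p+1:ℝ) = -(p-1) by ring, div_neg, ← neg_div, neg_sub,
    show (-(p-1):ℝ) = 1-p by ring] at h
  exact h

lemma tele (p : ℝ) (hp : 1 < p) (K : ℕ) (hK : 0 < K) :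
    HasSum (fun j : ℕ => ((K+j : ℕ) : ℝ) ^ (1-p) / (p-1) - ((K+j+1 : ℕ) : ℝ) ^ (1-p) / (p-1))
      ((K : ℝ) ^ (1-p) / (p-1)) := by
  have hnn : ∀ j : ℕ, 0 ≤ ((K+j : ℕ) : ℝ) ^ (1-p) / (p-1) - ((K+j+1 : ℕ) : ℝ) ^ (1-p) / (p-1) := by
    intro j
    have h2 : ((K+j+1:ℕ):ℝ) ^ (1-p) ≤ ((K+j:ℕ):ℝ) ^ (1-p) := by
      have h : 0 < K + j := by omega
      exact Real.rpow_le_rpow_of_nonpos (by exact_mod_cast h) (by push_cast; linarith)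
        (by linarith)
    rw [sub_nonneg]
    exact div_le_div_of_nonneg_right h2 (by linarith)
  rw [hasSum_iff_tendsto_nat_of_nonneg hnn]
  have hsum : ∀ n : ℕ, ∑ j ∈ Finset.range n,
      (((K+j : ℕ) : ℝ) ^ (1-p) / (p-1) - ((K+j+1 : ℕ) : ℝ) ^ (1-p) / (p-1))
      = (K : ℝ) ^ (1-p) / (p-1) - ((K+n : ℕ) : ℝ) ^ (1-p) / (p-1) :=
    fun n => Finset.sum_range_sub' (fun m : ℕ => ((K+m : ℕ) : ℝ) ^ (1-p) / (p-1)) n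
  simp only [hsum]
  have h0 : Tendsto (fun n : ℕ => ((K+n : ℕ) : ℝ) ^ (1-p) / (p-1)) atTop (nhds 0) := by
    have h1 : Tendsto (fun n : ℕ => ((K+n : ℕ) : ℝ)) atTop atTop := by
      apply tendsto_atTop_mono (fun n : ℕ => ?_) tendsto_natCast_atTop_atTop
      push_cast; linarith
    have h2 : Tendsto (fun x : ℝ => x ^ (-(p-1))) atTop (nhds 0) :=
      tendsto_rpow_neg_atTop (by linarith)
    have h3 := (h2.comp h1).div_const (p-1)
    simp only [Function.comp_def, show -(p-1) = 1-p by ring, zero_div] at h3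
    exact h3
  simpa using (tendsto_const_nhds.sub h0)

lemma tail_summable (p Y : ℝ) (hp : 1 < p) :
    Summable (fun k : ℕ => if Y < (k:ℝ) then (k:ℝ) ^ (-p) else 0) := by
  apply Summable.of_nonneg_of_le (fun k => by positivity)
    (fun k => by split <;> [exact le_rfl; positivity])
  exact Real.summable_nat_rpow.2 (by linarith)


lemma tail_decomp (p Y : ℝ) (hp : 1 < p) (hY : 1 ≤ Y) :
    ∑' k : ℕ, (if Y < (k:ℝ) then (k:ℝ) ^ (-p) else 0)
      = ∑' j : ℕ, ((j + (⌊Y⌋₊ + 1) : ℕ) : ℝ) ^ (-p) := by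
  set N := ⌊Y⌋₊ with hNdef
  have hs := tail_summable p Y hp
  have h1 := hs.sum_add_tsum_nat_add (N+1)
  have h2 : ∑ i ∈ Finset.range (N+1), (if Y < (i:ℝ) then (i:ℝ) ^ (-p) else 0) = 0 := by
    apply Finset.sum_eq_zero
    intro i hi
    rw [if_neg]
    push_neg
    calc (i:ℝ) ≤ N := by exact_mod_cast Nat.lt_succ_iff.mp (Finset.mem_range.mp hi)
      _ ≤ Y := Nat.floor_le (by linarith)
  have h3 : ∀ j : ℕ, (if Y < ((j + (N+1) : ℕ):ℝ) then ((j + (N+1) : ℕ):ℝ) ^ (-p) else 0)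
      = ((j + (N+1) : ℕ) : ℝ) ^ (-p) := by
    intro j
    rw [if_pos]
    have := Nat.lt_floor_add_one Y
    push_cast
    have : (0:ℝ) ≤ j := Nat.cast_nonneg j
    push_cast at *
    linarith [Nat.lt_floor_add_one Y]
  rw [← h1, h2, zero_add]
  exact tsum_congr h3

lemma tail_le (p Y : ℝ) (hp : 1 < p) (hY : 1 ≤ Y) :
    ∑' k : ℕ, (if Y < (k:ℝ) then (k:ℝ) ^ (-p) else 0) ≤ Y ^ (1-p) / (p-1) + Y ^ (-p) := by
  set N := ⌊Y⌋₊ with hNdef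
  have hN1 : 1 ≤ N := Nat.le_floor (by exact_mod_cast hY)
  have hYN : Y < (N:ℝ) + 1 := Nat.lt_floor_add_one Y
  rw [tail_decomp p Y hp hY]
  have hs := tail_summable p Y hp
  have hs2 : Summable (fun j : ℕ => ((j + (N+1) : ℕ) : ℝ) ^ (-p)) := by
    have := (summable_nat_add_iff (N+1)).mpr (Real.summable_nat_rpow.2 (show -p < -1 by linarith))
    exact_mod_cast this
  rw [Summable.tsum_eq_zero_add hs2]
  have hfirst : ((0 + (N+1) : ℕ) : ℝ) ^ (-p) ≤ Y ^ (-p) := by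
    apply Real.rpow_le_rpow_of_nonpos (by linarith) _ (by linarith)
    push_cast; linarith
  have hrest : ∑' j : ℕ, ((j + 1 + (N+1) : ℕ) : ℝ) ^ (-p) ≤ ((N+1 : ℕ) : ℝ) ^ (1-p) / (p-1) := by
    have hb : ∀ j : ℕ, ((j + 1 + (N+1) : ℕ) : ℝ) ^ (-p)
        ≤ (((N+1)+j : ℕ) : ℝ) ^ (1-p) / (p-1) - (((N+1)+j+1 : ℕ) : ℝ) ^ (1-p) / (p-1) := by
      intro j
      have e : j + 1 + (N+1) = (N+1)+j+1 := by omega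
      rw [e]
      have hA : (0:ℝ) < (((N+1)+j : ℕ) : ℝ) := by positivity
      have h := step_le p (((N+1)+j : ℕ) : ℝ) hp hA
      rw [div_sub_div_same]
      calc ((((N+1)+j+1 : ℕ)) : ℝ) ^ (-p) = ((((N+1)+j : ℕ):ℝ) + 1) ^ (-p) := by push_cast; ring_nf
        _ ≤ _ := h.trans_eq (by push_cast; ring_nf)
    have hsl : Summable (fun j : ℕ => ((j + 1 + (N+1) : ℕ) : ℝ) ^ (-p)) := by
      have := (summable_nat_add_iff (N+2)).mpr (Real.summable_nat_rpow.2 (show -p < -1 by linarith))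
      apply this.congr
      intro j
      congr 1
      push_cast; ring
    have := Summable.tsum_le_tsum hb hsl (tele p hp (N+1) (by omega)).summable
    calc ∑' j : ℕ, ((j + 1 + (N+1) : ℕ) : ℝ) ^ (-p) ≤ _ := this
      _ = ((N+1 : ℕ) : ℝ) ^ (1-p) / (p-1) := (tele p hp (N+1) (by omega)).tsum_eq
  have hlast : ((N+1 : ℕ) : ℝ) ^ (1-p) / (p-1) ≤ Y ^ (1-p) / (p-1) := by
    apply div_le_div_of_nonneg_right _ (by linarith)
    apply Real.rpow_le_rpow_of_nonpos (by linarith) (by push_cast; linarith) (by linarith)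
  linarith

lemma tail_ge (p Y : ℝ) (hp : 1 < p) (hY : 1 ≤ Y) :
    (Y+1) ^ (1-p) / (p-1) ≤ ∑' k : ℕ, (if Y < (k:ℝ) then (k:ℝ) ^ (-p) else 0) := by
  set N := ⌊Y⌋₊ with hNdef
  have hN1 : 1 ≤ N := Nat.le_floor (by exact_mod_cast hY)
  have hYN : Y < (N:ℝ) + 1 := Nat.lt_floor_add_one Y
  rw [tail_decomp p Y hp hY]
  have hs2 : Summable (fun j : ℕ => ((j + (N+1) : ℕ) : ℝ) ^ (-p)) := by
    have := (summable_nat_add_iff (N+1)).mpr (Real.summable_nat_rpow.2 (show -p < -1 by linarith))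
    exact_mod_cast this
  have hb : ∀ j : ℕ, (((N+1)+j : ℕ) : ℝ) ^ (1-p) / (p-1) - (((N+1)+j+1 : ℕ) : ℝ) ^ (1-p) / (p-1)
      ≤ ((j + (N+1) : ℕ) : ℝ) ^ (-p) := by
    intro j
    have e : j + (N+1) = (N+1)+j := by omega
    rw [e]
    have hA : (0:ℝ) < (((N+1)+j : ℕ) : ℝ) := by positivity
    have h := step_ge p (((N+1)+j : ℕ) : ℝ) hp hA
    rw [div_sub_div_same]
    refine le_trans (le_of_eq ?_) h
    push_cast; ring_nf
  have h1 := Summable.tsum_le_tsum hb (tele p hp (N+1) (by omega)).summable hs2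
  rw [(tele p hp (N+1) (by omega)).tsum_eq] at h1
  refine le_trans ?_ h1
  have hNY : (N:ℝ) ≤ Y := Nat.floor_le (by linarith)
  apply div_le_div_of_nonneg_right _ (by linarith)
  apply Real.rpow_le_rpow_of_nonpos (by positivity) (by push_cast; linarith) (by linarith)


lemma zsummable (s : ℝ) (hs : 1 < s) : Summable (fun k : ℕ => (k:ℝ) ^ (-s)) :=
  Real.summable_nat_rpow.2 (by linarith)

lemma zeta_re (s : ℝ) (hs : 1 < s) :
    (riemannZeta s).re = ∑' n : ℕ, (n:ℝ) ^ (-s) := by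
  have h := zeta_eq_tsum_one_div_nat_cpow (s := (s:ℂ)) (by simpa using hs)
  have h2 : ∀ n : ℕ, 1 / (n : ℂ) ^ (s:ℂ) = (((n:ℝ) ^ (-s) : ℝ) : ℂ) := by
    intro n
    rcases Nat.eq_zero_or_pos n with h0 | h0
    · subst h0
      rw [Nat.cast_zero, Nat.cast_zero, Complex.zero_cpow (by
          simpa using (by linarith : s ≠ 0)), Real.zero_rpow (by intro hc; simp at hc; linarith)]
      simp
    · rw [show ((n:ℕ):ℂ) = (((n:ℝ)):ℂ) by push_cast; ring, ← Complex.ofReal_cpow (by positivity),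
        Real.rpow_neg (by positivity)]
      push_cast
      rw [one_div]
  rw [h, tsum_congr h2, ← Complex.ofReal_tsum]
  simp
lemma zeta_re_nonneg (s : ℝ) (hs : 1 < s) : 0 ≤ (riemannZeta s).re := by
  rw [zeta_re s hs]
  exact tsum_nonneg (fun k => by positivity)


lemma sumC1 (a : ℝ) (ha : 0 < a) (ha1 : a < 1) (N : ℕ) (hN : 1 ≤ N) :
    ∑ m ∈ Finset.Icc 1 N, (m:ℝ) ^ (a-1) ≤ 1 + ((N:ℝ) ^ a - 1) / a := by
  induction N, hN using Nat.le_induction with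
  | base => norm_num
  | succ n hn ih =>
    rw [Finset.sum_Icc_succ_top (by omega)]
    have hstep : ((n+1 : ℕ):ℝ) ^ (a-1) ≤ (((n+1:ℕ)):ℝ) ^ a / a - ((n:ℕ):ℝ) ^ a / a := by
      have h := aux_le_left (a-1) (n:ℝ) (by linarith) (by intro hc; linarith [hc]) (by exact_mod_cast hn)
      rw [show a-1+1 = a by ring, sub_div] at h
      push_cast
      exact h
    simp only [sub_div] at ih hstep ⊢
    push_cast at *
    linarith

lemma sumC2 (a : ℝ) (ha : 0 < a) (N : ℕ) (hN : 1 ≤ N) :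
    ∑ m ∈ Finset.Icc 1 N, (m:ℝ) ^ a ≤ (N:ℝ) ^ a + ((N:ℝ) ^ (1+a) - 1) / (1+a) := by
  induction N, hN using Nat.le_induction with
  | base => norm_num
  | succ n hn ih =>
    rw [Finset.sum_Icc_succ_top (by omega)]
    have hstep : ((n : ℕ):ℝ) ^ a ≤ (((n+1:ℕ)):ℝ) ^ (1+a) / (1+a) - ((n:ℕ):ℝ) ^ (1+a) / (1+a) := by
      have h := aux_ge a (n:ℝ) ha.le (by exact_mod_cast hn)
      rw [show a+1 = 1+a by ring, sub_div] at h
      push_cast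
      exact h
    simp only [sub_div] at ih hstep ⊢
    push_cast at *
    linarith


lemma summable_G (a lam : ℝ) (ha : 0 < a) (hlam : 0 < lam) :
    Summable (fun q : ℕ × ℕ => (q.1:ℝ) ^ (-(1+lam)) * (q.2:ℝ) ^ (-(1+a+lam))) := by
  have h1 : Summable (fun m : ℕ => (m:ℝ) ^ (-(1+lam))) := Real.summable_nat_rpow.2 (by linarith)
  have h2 : Summable (fun k : ℕ => (k:ℝ) ^ (-(1+a+lam))) := Real.summable_nat_rpow.2 (by linarith)
  exact h1.mul_of_nonneg h2 (fun m => by positivity) (fun k => by positivity)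

lemma summable_F (a lam X : ℝ) (ha : 0 < a) (hlam : 0 < lam) :
    Summable (fun q : ℕ × ℕ =>
      if X < ((q.1 * q.2 : ℕ):ℝ) then (q.1:ℝ) ^ (-(1+lam)) * (q.2:ℝ) ^ (-(1+a+lam)) else 0) := by
  apply Summable.of_nonneg_of_le (fun q => by positivity)
    (fun q => by split <;> [exact le_rfl; positivity]) (summable_G a lam ha hlam)

lemma rearrange (a lam X : ℝ) (ha : 0 < a) (hlam : 0 < lam) (hX : 0 ≤ X) :
    (∑' n : ℕ, if X < (n:ℝ) then da a n / (n:ℝ) ^ (1+a+lam) else 0)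
      = ∑' q : ℕ × ℕ,
          (if X < ((q.1 * q.2 : ℕ):ℝ) then (q.1:ℝ) ^ (-(1+lam)) * (q.2:ℝ) ^ (-(1+a+lam)) else 0) := by
  classical
  set F := fun q : ℕ × ℕ =>
      if X < ((q.1 * q.2 : ℕ):ℝ) then (q.1:ℝ) ^ (-(1+lam)) * (q.2:ℝ) ^ (-(1+a+lam)) else 0 with hFdef
  have hF : Summable F := summable_F a lam X ha hlam
  have hfib := hF.hasSum.tsum_fiberwise (fun q : ℕ × ℕ => q.1 * q.2)
  have key : ∀ n : ℕ, (∑' q : (fun q : ℕ × ℕ => q.1 * q.2) ⁻¹' {n}, F q)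
      = if X < (n:ℝ) then da a n / (n:ℝ) ^ (1+a+lam) else 0 := by
    intro n
    rw [tsum_subtype]
    rw [tsum_eq_sum (s := n.divisorsAntidiagonal) (f := Set.indicator _ F) ?side]
    case side =>
      intro q hq
      by_cases hqn : q.1 * q.2 = n
      · have hn0 : n = 0 := by
          by_contra hne
          exact hq (Nat.mem_divisorsAntidiagonal.mpr ⟨hqn, hne⟩)
        have hF0 : F q = 0 := by
          rw [hFdef]
          simp only
          rw [if_neg]
          rw [hqn, hn0]
          push_cast
          linarith
        rw [Set.indicator_apply]
        split <;> simp [hF0]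
      · exact Set.indicator_of_notMem (by simpa using hqn) F
    have hind : ∀ q ∈ n.divisorsAntidiagonal, Set.indicator ((fun q : ℕ × ℕ => q.1 * q.2) ⁻¹' {n}) F q
        = if X < (n:ℝ) then (q.1:ℝ) ^ (-(1+lam)) * (q.2:ℝ) ^ (-(1+a+lam)) else 0 := by
      intro q hq
      have hqn : q.1 * q.2 = n := (Nat.mem_divisorsAntidiagonal.mp hq).1
      rw [Set.indicator_of_mem (by simpa using hqn), hFdef]
      simp only [hqn]
    rw [Finset.sum_congr rfl hind]
    rcases Nat.eq_zero_or_pos n with hn0 | hn0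
    · subst hn0
      rw [if_neg (by push_cast; linarith)]
      simp
    · rw [Finset.sum_ite_irrel, Finset.sum_const_zero]
      by_cases hc : X < (n:ℝ)
      · rw [if_pos hc, if_pos hc]
        rw [Nat.sum_divisorsAntidiagonal (f := fun m k => (m:ℝ) ^ (-(1+lam)) * (k:ℝ) ^ (-(1+a+lam)))]
        rw [da, Finset.sum_div]
        apply Finset.sum_congr rfl
        intro m hm
        obtain ⟨hdvd, hne⟩ := Nat.mem_divisors.mp hm
        have hm0 : 0 < m := Nat.pos_of_mem_divisors hm
        have hcast : ((n / m : ℕ):ℝ) = (n:ℝ) / (m:ℝ) := by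
          rw [Nat.cast_div hdvd (by exact_mod_cast hm0.ne')]
        rw [hcast, Real.div_rpow (by positivity) (by positivity)]
        rw [div_eq_mul_inv ((n:ℝ) ^ (-(1+a+lam))), ← Real.rpow_neg (by positivity), neg_neg]
        rw [show ((m:ℝ) ^ (-(1+lam)) * ((n:ℝ) ^ (-(1+a+lam)) * (m:ℝ) ^ (1+a+lam)))
            = ((m:ℝ) ^ (-(1+lam)) * (m:ℝ) ^ (1+a+lam)) * (n:ℝ) ^ (-(1+a+lam)) by ring]
        rw [← Real.rpow_add (by exact_mod_cast hm0), show -(1+lam) + (1+a+lam) = a by ring]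
        rw [Real.rpow_neg (by positivity), div_eq_mul_inv]
      · rw [if_neg hc, if_neg hc]
  have := hfib
  simp_rw [key] at this
  exact this.tsum_eq
set_option maxHeartbeats 1000000 in
theorem tail_sum_da (σ lam X : ℝ) (hσ0 : 0 < σ) (hσ1 : σ < 1 / 2) (hlam : 0 < lam)
    (hX : 1 ≤ X) :
    ∃ θ : ℝ, |θ| ≤ 1 ∧
      (∑' n : ℕ, if X < (n : ℝ) then da (1 - 2 * σ) n / (n : ℝ) ^ (2 - 2 * σ + lam) else 0) =
        (riemannZeta (2 - 2 * σ + lam)).re / (lam * X ^ lam)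
          + θ * ((1 / (2 - 2 * σ) + 1 / ((1 - 2 * σ) * (1 - 2 * σ + lam))) / X ^ lam
            + ((riemannZeta (2 - 2 * σ + lam)).re + 1 / (1 - 2 * σ + lam) + 1) / X ^ (1 + lam)) := by
  classical
  have hX0 : (0:ℝ) < X := by linarith
  set a : ℝ := 1 - 2 * σ with ha
  have ha0 : 0 < a := by rw [ha]; linarith
  have ha1 : a < 1 := by rw [ha]; linarith
  have hs1 : 1 < 1 + a + lam := by linarith
  -- rewrite the exponent and zeta argument
  have hzarg : riemannZeta (2 - 2 * (σ:ℂ) + (lam:ℂ)) = riemannZeta (((1 + a + lam : ℝ)):ℂ) := by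
    congr 1
    rw [ha]
    push_cast
    ring
  rw [show (2 - 2 * σ + lam : ℝ) = 1 + a + lam by rw [ha]; ring]
  rw [show (2 - 2 * σ : ℝ) = 1 + a by rw [ha]; ring]
  rw [hzarg]
  set Z : ℝ := (riemannZeta (((1 + a + lam : ℝ)):ℂ)).re with hZdef
  have hZ : Z = ∑' k : ℕ, (k:ℝ) ^ (-(1+a+lam)) := zeta_re (1+a+lam) hs1
  have hZ0 : 0 ≤ Z := by
    rw [hZ]; exact tsum_nonneg (fun k => by positivity)
  -- abbreviations
  set P : ℝ := X ^ (-lam) with hPdef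
  set Q : ℝ := X ^ (-(1+lam)) with hQdef
  set R : ℝ := X ^ (-(a+lam)) with hRdef
  set W : ℝ := X ^ (-(1+a+lam)) with hWdef
  have hP0 : 0 < P := by rw [hPdef]; positivity
  have hQ0 : 0 < Q := by rw [hQdef]; positivity
  have hR0 : 0 < R := by rw [hRdef]; positivity
  have hW0 : 0 < W := by rw [hWdef]; positivity
  have hRa : R * X ^ a = P := by
    rw [hRdef, hPdef, ← Real.rpow_add hX0]; ring_nf
  have hWa : W * X ^ a = Q := by
    rw [hWdef, hQdef, ← Real.rpow_add hX0]; ring_nf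
  have hW1a : W * X ^ (1+a) = P := by
    rw [hWdef, hPdef, ← Real.rpow_add hX0]; ring_nf
  -- the two pieces
  set F : ℕ × ℕ → ℝ := fun q =>
      if X < ((q.1 * q.2 : ℕ):ℝ) then (q.1:ℝ) ^ (-(1+lam)) * (q.2:ℝ) ^ (-(1+a+lam)) else 0
    with hFdef
  set F1 : ℕ × ℕ → ℝ := fun q =>
      (if X < (q.1:ℝ) then (q.1:ℝ) ^ (-(1+lam)) else 0) * (q.2:ℝ) ^ (-(1+a+lam)) with hF1def
  set F2 : ℕ × ℕ → ℝ := fun q => if X < (q.1:ℝ) then 0 else F q with hF2def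
  have hFnn : ∀ q, 0 ≤ F q := fun q => by
    rw [hFdef]; dsimp only; split
    · positivity
    · exact le_rfl
  have hF : Summable F := summable_F a lam X ha0 hlam
  have hsplit : ∀ q : ℕ × ℕ, F q = F1 q + F2 q := by
    intro q
    by_cases h1 : X < (q.1:ℝ)
    · rw [hF2def]; dsimp only; rw [if_pos h1, add_zero, hF1def]; dsimp only; rw [if_pos h1]
      rcases Nat.eq_zero_or_pos q.2 with h2 | h2
      · rw [hFdef]; dsimp only
        rw [h2, Nat.mul_zero, if_neg (by push_cast; linarith), Nat.cast_zero,
          Real.zero_rpow (by intro hc; linarith [hc]), mul_zero]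
      · rw [hFdef]; dsimp only
        rw [if_pos]
        have hle : q.1 ≤ q.1 * q.2 := Nat.le_mul_of_pos_right _ h2
        have : (q.1 : ℝ) ≤ ((q.1 * q.2 : ℕ):ℝ) := by exact_mod_cast hle
        linarith
    · rw [hF2def]; dsimp only; rw [if_neg h1, hF1def]; dsimp only; rw [if_neg h1, zero_mul, zero_add]
  have hF1nn : ∀ q, 0 ≤ F1 q := fun q => by
    rw [hF1def]; dsimp only; split
    · positivity
    · rw [zero_mul]
  have hF2nn : ∀ q, 0 ≤ F2 q := fun q => by
    rw [hF2def]; dsimp only; split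
    · exact le_rfl
    · exact hFnn q
  have hF2le : ∀ q, F2 q ≤ F q := fun q => by
    rw [hF2def]; dsimp only; split
    · exact hFnn q
    · exact le_rfl
  have hF2 : Summable F2 := Summable.of_nonneg_of_le hF2nn hF2le hF
  have hF1 : Summable F1 := by
    have h1 : Summable (fun m : ℕ => if X < (m:ℝ) then (m:ℝ) ^ (-(1+lam)) else 0) :=
      tail_summable (1+lam) X (by linarith)
    have h2 : Summable (fun k : ℕ => (k:ℝ) ^ (-(1+a+lam))) :=
      Real.summable_nat_rpow.2 (by linarith)
    exact h1.mul_of_nonneg h2 (fun m => by dsimp only; split <;> positivity)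
      (fun k => by positivity)
  -- value of ∑' F1
  set T0 : ℝ := ∑' m : ℕ, (if X < (m:ℝ) then (m:ℝ) ^ (-(1+lam)) else 0) with hT0def
  have hF1val : ∑' q : ℕ × ℕ, F1 q = T0 * Z := by
    rw [Summable.tsum_prod hF1, hF1def]
    have : ∀ m : ℕ, ∑' k : ℕ, (if X < (m:ℝ) then (m:ℝ) ^ (-(1+lam)) else 0) * (k:ℝ) ^ (-(1+a+lam))
        = (if X < (m:ℝ) then (m:ℝ) ^ (-(1+lam)) else 0) * Z := by
      intro m
      rw [tsum_mul_left, hZ]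
    simp only [this]
    rw [tsum_mul_right]
  -- bounds for T0
  have hT0le : T0 ≤ P / lam + Q := by
    have h := tail_le (1+lam) X (by linarith) hX
    rw [show (1 - (1+lam) : ℝ) = -lam by ring, show ((1+lam) - 1 : ℝ) = lam by ring] at h
    rw [hT0def, hPdef, hQdef]
    exact h
  have hT0ge : P / lam - Q ≤ T0 := by
    have h := tail_ge (1+lam) X (by linarith) hX
    rw [show (1 - (1+lam) : ℝ) = -lam by ring, show ((1+lam) - 1 : ℝ) = lam by ring] at h
    have h2 := step_ge (1+lam) X (by linarith) hX0
    rw [show (1 - (1+lam) : ℝ) = -lam by ring, show ((1+lam) - 1 : ℝ) = lam by ring, sub_div] at h2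
    rw [hT0def, hPdef, hQdef]
    linarith
  -- bound for ∑' F2
  set N : ℕ := ⌊X⌋₊ with hNdef
  have hN1 : 1 ≤ N := Nat.le_floor (by exact_mod_cast hX)
  have hNX : (N:ℝ) ≤ X := Nat.floor_le (by linarith)
  have hXN : X < (N:ℝ) + 1 := Nat.lt_floor_add_one X
  set c1 : ℝ := R / (a+lam) with hc1def
  have hc10 : 0 ≤ c1 := by rw [hc1def]; positivity
  set u : ℕ → ℝ := fun m => ∑' k : ℕ, F2 (m, k) with hudef
  have hunn : ∀ m, 0 ≤ u m := fun m => tsum_nonneg (fun k => hF2nn (m, k))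
  have hF2val : ∑' q : ℕ × ℕ, F2 q = ∑' m : ℕ, u m := by
    rw [Summable.tsum_prod hF2, hudef]
  have hu0 : ∀ m : ℕ, m ∉ Finset.range (N+1) → u m = 0 := by
    intro m hm
    rw [hudef]
    dsimp only
    have hm' : X < (m:ℝ) := by
      have : (N:ℝ) + 1 ≤ (m:ℝ) := by
        have : N + 1 ≤ m := by simpa using hm
        exact_mod_cast this
      linarith
    have : ∀ k : ℕ, F2 (m, k) = 0 := by
      intro k
      rw [hF2def]
      dsimp only
      rw [if_pos hm']
    simp only [this, tsum_zero]
  have huzero : u 0 = 0 := by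
    rw [hudef]
    dsimp only
    have : ∀ k : ℕ, F2 (0, k) = 0 := by
      intro k
      rw [hF2def, hFdef]
      dsimp only
      rw [if_neg (by push_cast; linarith), if_neg (by push_cast; linarith)]
    simp only [this, tsum_zero]
  have hubound : ∀ m ∈ Finset.Icc 1 N, u m ≤ c1 * (m:ℝ) ^ (a-1) + W * (m:ℝ) ^ a := by
    intro m hm
    obtain ⟨hm1, hmN⟩ := Finset.mem_Icc.mp hm
    have hm0 : (0:ℝ) < (m:ℝ) := by exact_mod_cast hm1
    have hmX : (m:ℝ) ≤ X := le_trans (by exact_mod_cast hmN) hNX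
    have hYm : 1 ≤ X / (m:ℝ) := (one_le_div hm0).mpr hmX
    have hcond : ∀ k : ℕ, (X < ((m * k : ℕ):ℝ)) ↔ (X / (m:ℝ) < (k:ℝ)) := by
      intro k
      rw [div_lt_iff₀ hm0]
      push_cast
      constructor <;> intro h <;> nlinarith
    have huval : u m = (m:ℝ) ^ (-(1+lam)) *
        ∑' k : ℕ, (if X / (m:ℝ) < (k:ℝ) then (k:ℝ) ^ (-(1+a+lam)) else 0) := by
      rw [hudef]
      dsimp only
      rw [← tsum_mul_left]
      apply tsum_congr
      intro k
      rw [hF2def]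
      dsimp only
      rw [if_neg (by push_neg; linarith), hFdef]
      dsimp only
      by_cases hc : X < ((m * k : ℕ):ℝ)
      · rw [if_pos hc, if_pos ((hcond k).mp hc)]
      · rw [if_neg hc, if_neg (fun hcc => hc ((hcond k).mpr hcc)), mul_zero]
    have htail := tail_le (1+a+lam) (X / (m:ℝ)) hs1 hYm
    rw [show (1 - (1+a+lam) : ℝ) = -(a+lam) by ring,
      show ((1+a+lam) - 1 : ℝ) = a+lam by ring] at htail
    have hdiv1 : (X / (m:ℝ)) ^ (-(a+lam)) = R * (m:ℝ) ^ (a+lam) := by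
      rw [div_eq_mul_inv, Real.mul_rpow hX0.le (by positivity),
        Real.inv_rpow hm0.le, ← Real.rpow_neg hm0.le, neg_neg, hRdef]
    have hdiv2 : (X / (m:ℝ)) ^ (-(1+a+lam)) = W * (m:ℝ) ^ (1+a+lam) := by
      rw [div_eq_mul_inv, Real.mul_rpow hX0.le (by positivity),
        Real.inv_rpow hm0.le, ← Real.rpow_neg hm0.le, neg_neg, hWdef]
    calc u m ≤ (m:ℝ) ^ (-(1+lam)) * ((X / (m:ℝ)) ^ (-(a+lam)) / (a+lam) + (X / (m:ℝ)) ^ (-(1+a+lam))) := by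
          rw [huval]
          exact mul_le_mul_of_nonneg_left htail (by positivity)
      _ = c1 * (m:ℝ) ^ (a-1) + W * (m:ℝ) ^ a := by
          rw [hdiv1, hdiv2, hc1def]
          rw [show (m:ℝ) ^ (-(1+lam)) * (R * (m:ℝ) ^ (a+lam) / (a+lam) + W * (m:ℝ) ^ (1+a+lam))
              = (R / (a+lam)) * ((m:ℝ) ^ (-(1+lam)) * (m:ℝ) ^ (a+lam))
                + W * ((m:ℝ) ^ (-(1+lam)) * (m:ℝ) ^ (1+a+lam)) by ring]
          rw [← Real.rpow_add hm0, ← Real.rpow_add hm0]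
          ring_nf
  -- sum over m of u
  set R2 : ℝ := ∑' q : ℕ × ℕ, F2 q with hR2def
  have hR20 : 0 ≤ R2 := tsum_nonneg hF2nn
  have hR2sum : R2 = ∑ m ∈ Finset.Icc 1 N, u m := by
    rw [hF2val, tsum_eq_sum hu0, Finset.range_eq_Ico,
      Finset.sum_eq_sum_Ico_succ_bot (by omega) u, huzero, zero_add, Finset.Ico_add_one_right_eq_Icc]
  have hR2le : R2 ≤ c1 * (1 + (X ^ a - 1)/a) + W * (X ^ a + (X ^ (1+a) - 1)/(1+a)) := by
    rw [hR2sum]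
    calc ∑ m ∈ Finset.Icc 1 N, u m
        ≤ ∑ m ∈ Finset.Icc 1 N, (c1 * (m:ℝ) ^ (a-1) + W * (m:ℝ) ^ a) :=
          Finset.sum_le_sum hubound
      _ = c1 * (∑ m ∈ Finset.Icc 1 N, (m:ℝ) ^ (a-1)) + W * (∑ m ∈ Finset.Icc 1 N, (m:ℝ) ^ a) := by
          rw [Finset.sum_add_distrib, Finset.mul_sum, Finset.mul_sum]
      _ ≤ c1 * (1 + ((N:ℝ) ^ a - 1)/a) + W * ((N:ℝ) ^ a + ((N:ℝ) ^ (1+a) - 1)/(1+a)) := by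
          apply add_le_add
          · exact mul_le_mul_of_nonneg_left (sumC1 a ha0 ha1 N hN1) hc10
          · exact mul_le_mul_of_nonneg_left (sumC2 a ha0 N hN1) hW0.le
      _ ≤ _ := by
          have e1 : (N:ℝ) ^ a ≤ X ^ a := Real.rpow_le_rpow (by positivity) hNX ha0.le
          have e2 : (N:ℝ) ^ (1+a) ≤ X ^ (1+a) := Real.rpow_le_rpow (by positivity) hNX (by linarith)
          apply add_le_add
          · apply mul_le_mul_of_nonneg_left _ hc10
            have : ((N:ℝ) ^ a - 1)/a ≤ (X ^ a - 1)/a :=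
              div_le_div_of_nonneg_right (by linarith) ha0.le
            linarith
          · apply mul_le_mul_of_nonneg_left _ hW0.le
            have : ((N:ℝ) ^ (1+a) - 1)/(1+a) ≤ (X ^ (1+a) - 1)/(1+a) :=
              div_le_div_of_nonneg_right (by linarith) (by linarith : (0:ℝ) ≤ 1+a)
            linarith
  -- total sum value
  have hSval : (∑' n : ℕ, if X < (n:ℝ) then da a n / (n:ℝ) ^ (1+a+lam) else 0) = T0 * Z + R2 := by
    rw [rearrange a lam X ha0 hlam (by linarith)]
    rw [hR2def, ← hF1val]
    rw [← Summable.tsum_add hF1 hF2]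
    exact tsum_congr hsplit
  -- error bounds
  set E1 : ℝ := 1/(1+a) + 1/(a*(a+lam)) with hE1def
  set E2 : ℝ := Z + 1/(a+lam) + 1 with hE2def
  have hd1 : (0:ℝ) < a * (a+lam) := by nlinarith
  have hR2le2 : R2 ≤ E1 * P + (1/(a+lam) + 1) * Q := by
    have k1 : c1 * (1 + (X ^ a - 1)/a) ≤ P / (a*(a+lam)) := by
      have hPR : R * (X ^ a - 1) = P - R := by rw [mul_sub, hRa, mul_one]
      have e : c1 * (1 + (X ^ a - 1)/a) = R/(a+lam) + (P - R)/(a*(a+lam)) := by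
        rw [hc1def, ← hPR]
        field_simp
      rw [e]
      have i1 : R/(a+lam) ≤ R/(a*(a+lam)) := by
        gcongr
        nlinarith
      have i2 : R/(a*(a+lam)) + (P - R)/(a*(a+lam)) = P/(a*(a+lam)) := by
        rw [← add_div]
        ring_nf
      linarith
    have k2 : W * (X ^ a + (X ^ (1+a) - 1)/(1+a)) ≤ Q + P/(1+a) := by
      have e : W * (X ^ a + (X ^ (1+a) - 1)/(1+a)) = Q + (P - W)/(1+a) := by
        rw [← hWa, ← hW1a]
        field_simp
      rw [e]
      have : (P - W)/(1+a) ≤ P/(1+a) :=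
        div_le_div_of_nonneg_right (by linarith) (by linarith : (0:ℝ) ≤ 1+a)
      linarith
    have hQa : 0 ≤ Q/(a+lam) := by positivity
    have expand1 : E1 * P = P/(1+a) + P/(a*(a+lam)) := by rw [hE1def]; ring
    have expand2 : (1/(a+lam) + 1) * Q = Q/(a+lam) + Q := by ring
    linarith
  have hE1pos : 0 < E1 := by rw [hE1def]; positivity
  have hE2pos : 0 < E2 := by
    rw [hE2def]
    have : (0:ℝ) < 1/(a+lam) := by positivity
    linarith
  have hE0 : 0 < E1 * P + E2 * Q := by
    have h1 := mul_pos hE1pos hP0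
    have h2 := mul_pos hE2pos hQ0
    linarith
  have hexp : E2 * Q = Z * Q + (1/(a+lam) + 1) * Q := by rw [hE2def]; ring
  have hZmul1 : Z * (T0 - P/lam) ≤ Z * Q := mul_le_mul_of_nonneg_left (by linarith) hZ0
  have hZmul2 : Z * (-Q) ≤ Z * (T0 - P/lam) := mul_le_mul_of_nonneg_left (by linarith) hZ0
  have hZexp : Z * (T0 - P/lam) = T0 * Z - Z * P / lam := by ring
  have hE1P : 0 ≤ E1 * P := mul_nonneg hE1pos.le hP0.le
  have hDub : T0 * Z + R2 - Z * P / lam ≤ E1 * P + E2 * Q := by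
    linarith
  have hDlb : -(E1 * P + E2 * Q) ≤ T0 * Z + R2 - Z * P / lam := by
    have hZQ : Z * (-Q) = -(Z * Q) := by ring
    have hcQ : 0 ≤ (1/(a+lam) + 1) * Q :=
      mul_nonneg (by positivity : (0:ℝ) ≤ 1/(a+lam) + 1) hQ0.le
    linarith
  refine ⟨(T0 * Z + R2 - Z * P / lam) / (E1 * P + E2 * Q), ?_, ?_⟩
  · rw [abs_div, abs_of_pos hE0, div_le_one hE0, abs_le]
    exact ⟨hDlb, hDub⟩
  · have hMain : Z/(lam * X ^ lam) = Z * P / lam := by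
      rw [hPdef, Real.rpow_neg hX0.le]
      field_simp
    have hEeq : E1 / X ^ lam + E2 / X ^ (1+lam) = E1 * P + E2 * Q := by
      rw [hPdef, hQdef, Real.rpow_neg hX0.le, Real.rpow_neg hX0.le]
      ring
    rw [hSval, hMain, hEeq, div_mul_cancel₀ _ hE0.ne']
    ring
end
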